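/- arXiv:2205.08187 — 6 statements merged into one kernel-verified Lean document; each statement's English description precedes it below -/
import Mathlib

section
/- Let ρ be a Lévy measure on (0,∞) (i.e., ∫ min(1,x) ρ(dx) < ∞) with tail intensity ρ̄(x) = ρ((x,∞)) satisfying ρ̄(x) ~ c x^{-τ} as x → ∞ for some c, τ > 0. Define ν̄(x) = ∫₀^∞ ρ̄(x/z) · Gamma(z; 1/2, 1/2) dz, where Gamma(·; 1/2, 1/2) is the density of the gamma distribution with shape 1/2 and rate 1/2 (the chi-squared with 1 degree of freedom). Then ν̄(x) ~ (2^τ Γ(τ+1/2)/√π) · c · x^{-τ} as x → ∞. -/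
open MeasureTheory Filter Topology

/-- A measure `ρ` on `(0,∞)` is a Lévy measure: it gives no mass to `(-∞,0]` and
integrates `min(1,x)`. -/
def IsLevyMeasure (ρ : Measure ℝ) : Prop :=
  ρ (Set.Iic 0) = 0 ∧ ∫⁻ x, ENNReal.ofReal (min 1 x) ∂ρ ≠ ⊤

lemma stmt6_aux_int (s : ℝ) (hs : -1 < s) :
    IntegrableOn (fun z : ℝ => z ^ s * Real.exp (-z / 2)) (Set.Ioi 0) := by
  have h := integrableOn_rpow_mul_exp_neg_mul_rpow (p := 1) (s := s) (b := 1/2) hs (by norm_num)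
    (by norm_num)
  have h2 : (fun z : ℝ => z ^ s * Real.exp (-z / 2))
      = fun z : ℝ => z ^ s * Real.exp (-(1/2) * z ^ (1:ℝ)) := by
    funext z; rw [Real.rpow_one]; ring_nf
  rw [h2]; exact h

lemma stmt6_aux_val (a : ℝ) (ha : 0 < a) :
    ∫ z in Set.Ioi (0:ℝ), z ^ (a - 1) * Real.exp (-z / 2) = 2 ^ a * Real.Gamma a := by
  have h := Real.integral_rpow_mul_exp_neg_mul_Ioi ha (by norm_num : (0:ℝ) < 1/2)
  have h2 : ∀ z : ℝ, z ^ (a - 1) * Real.exp (-z / 2) = z ^ (a-1) * Real.exp (-(1/2 * z)) := by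
    intro z; ring_nf
  simp_rw [h2, h]
  norm_num

/-- If the tail Lévy intensity `ρ̄(x) = ρ((x,∞))` satisfies `ρ̄(x) ~ c x^{-τ}` as `x → ∞`,
then the mixed tail `ν̄(x) = ∫₀^∞ ρ̄(x/z) Gamma(z;1/2,1/2) dz` satisfies
`ν̄(x) ~ (2^τ Γ(τ+1/2)/√π) c x^{-τ}` as `x → ∞`. -/
theorem stmt_6 (ρ : Measure ℝ) (hρ : IsLevyMeasure ρ) (c τ : ℝ) (hc : 0 < c) (hτ : 0 < τ)
    (htail : Tendsto (fun x : ℝ => (ρ (Set.Ioi x)).toReal / (c * x ^ (-τ)))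
      atTop (𝓝 1)) :
    Tendsto (fun x : ℝ =>
        (∫ z in Set.Ioi (0 : ℝ), (ρ (Set.Ioi (x / z))).toReal *
            ((1 / Real.sqrt (2 * Real.pi)) * z ^ (-(1 : ℝ) / 2) * Real.exp (-z / 2))) /
          ((2 : ℝ) ^ τ * Real.Gamma (τ + 1 / 2) / Real.sqrt Real.pi * c * x ^ (-τ)))
      atTop (𝓝 1) := by
  have hπ : (0:ℝ) < Real.sqrt (2 * Real.pi) := Real.sqrt_pos.mpr (by positivity)
  set K : ℝ := 1 / Real.sqrt (2 * Real.pi) with hK_def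
  set r : ℝ → ℝ := fun y => (ρ (Set.Ioi y)).toReal with hr_def
  set g : ℝ → ℝ := fun z => K * z ^ (-(1:ℝ)/2) * Real.exp (-z/2) with hg_def
  set A : ℝ := (∫⁻ x, ENNReal.ofReal (min 1 x) ∂ρ).toReal with hA_def
  set D : ℝ := (2:ℝ) ^ τ * Real.Gamma (τ + 1/2) / Real.sqrt Real.pi * c with hD_def
  have hK0 : 0 < K := by positivity
  have hA0 : 0 ≤ A := ENNReal.toReal_nonneg
  have hr0 : ∀ y, 0 ≤ r y := fun y => ENNReal.toReal_nonneg
  have hg0 : ∀ z : ℝ, 0 < z → 0 ≤ g z := by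
    intro z hz
    have h2 : (0:ℝ) ≤ z ^ (-(1:ℝ)/2) := (Real.rpow_pos_of_pos hz _).le
    positivity
  -- Lévy bound
  have hlev : ∀ y : ℝ, 0 < y → r y * min 1 y ≤ A := by
    intro y hy
    have hkey : ENNReal.ofReal (min 1 y) * ρ (Set.Ioi y)
        ≤ ∫⁻ x, ENNReal.ofReal (min 1 x) ∂ρ := by
      calc ENNReal.ofReal (min 1 y) * ρ (Set.Ioi y)
          = ∫⁻ _ in Set.Ioi y, ENNReal.ofReal (min 1 y) ∂ρ := by
            rw [setLIntegral_const, mul_comm]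
        _ ≤ ∫⁻ x in Set.Ioi y, ENNReal.ofReal (min 1 x) ∂ρ := by
            refine setLIntegral_mono ((measurable_const.min measurable_id).ennreal_ofReal)
              (fun x hx => ?_)
            exact ENNReal.ofReal_le_ofReal (min_le_min le_rfl (le_of_lt hx))
        _ ≤ ∫⁻ x, ENNReal.ofReal (min 1 x) ∂ρ := setLIntegral_le_lintegral _ _
    have hmin : 0 < min 1 y := lt_min one_pos hy
    have := ENNReal.toReal_mono hρ.2 hkey
    rwa [ENNReal.toReal_mul, ENNReal.toReal_ofReal hmin.le, mul_comm] at this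
  -- tail bound from htail
  obtain ⟨Y, hYtail'⟩ : ∃ Y : ℝ, ∀ y ≥ Y, 1 ≤ y ∧ r y / (c * y ^ (-τ)) ≤ 2 := by
    have h1 : ∀ᶠ y : ℝ in atTop, r y / (c * y ^ (-τ)) ≤ 2 :=
      htail.eventually (eventually_le_nhds one_lt_two)
    have h2 : ∀ᶠ y : ℝ in atTop, 1 ≤ y := eventually_ge_atTop 1
    exact eventually_atTop.mp (h2.and h1)
  set Y' := Y ⊔ 1 with hY'_def
  have hY1 : 1 ≤ Y' := le_max_right _ _
  have hYtail : ∀ y ≥ Y', r y ≤ 2 * (c * y ^ (-τ)) := by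
    intro y hy
    have hy1 : (1:ℝ) ≤ y := le_trans hY1 hy
    have hpos : 0 < c * y ^ (-τ) := by
      have := Real.rpow_pos_of_pos (lt_of_lt_of_le one_pos hy1) (-τ)
      positivity
    have h2 := (hYtail' y (le_trans (le_max_left _ _) hy)).2
    calc r y = r y / (c * y ^ (-τ)) * (c * y ^ (-τ)) := by field_simp
      _ ≤ 2 * (c * y ^ (-τ)) := mul_le_mul_of_nonneg_right h2 hpos.le
  have hY'0 : 0 < Y' := lt_of_lt_of_le one_pos hY1
  -- measurability of r and g
  have hrmeas : Measurable r := by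
    have h : Antitone (fun y : ℝ => ρ (Set.Ioi y)) :=
      fun a b hab => measure_mono (Set.Ioi_subset_Ioi hab)
    exact ENNReal.measurable_toReal.comp h.measurable
  have hgmeas : Measurable g :=
    (measurable_const.mul (measurable_id.pow_const _)).mul ((measurable_id.neg.div_const 2).exp)
  -- DCT
  have hDCT : Tendsto (fun x : ℝ => ∫ z in Set.Ioi (0:ℝ), x ^ τ * (r (x/z) * g z)) atTop
      (𝓝 (∫ z in Set.Ioi (0:ℝ), c * (z ^ τ * g z))) := by
    refine tendsto_integral_filter_of_dominated_convergence
      (fun z => (2*c + A * Y' ^ τ * (1+z)) * (z ^ τ * g z)) ?_ ?_ ?_ ?_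
    · -- measurability
      refine Eventually.of_forall (fun x => ?_)
      exact ((measurable_const.mul ((hrmeas.comp (measurable_const.div measurable_id)).mul
        hgmeas))).aestronglyMeasurable
    · -- bound
      filter_upwards [eventually_ge_atTop Y'] with x hx
      rw [ae_restrict_iff' measurableSet_Ioi]
      refine Eventually.of_forall (fun z hz => ?_)
      simp only [Set.mem_Ioi] at hz
      have hx0 : 0 < x := lt_of_lt_of_le hY'0 hx
      have hx1 : (1:ℝ) ≤ x := le_trans hY1 hx
      have hxτ : (0:ℝ) < x ^ τ := Real.rpow_pos_of_pos hx0 τ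
      have hzτ : (0:ℝ) < z ^ τ := Real.rpow_pos_of_pos hz τ
      have hgz := hg0 z hz
      rw [Real.norm_eq_abs, abs_of_nonneg (mul_nonneg hxτ.le (mul_nonneg (hr0 (x/z)) hgz))]
      rcases le_or_gt Y' (x/z) with hcase | hcase
      · -- large x/z : use the tail bound
        have h1 := hYtail _ hcase
        have hxz : (x/z) ^ (-τ) = x ^ (-τ) * z ^ τ := by
          rw [Real.div_rpow hx0.le hz.le, Real.rpow_neg hz.le, div_inv_eq_mul]
        rw [hxz] at h1
        calc x ^ τ * (r (x/z) * g z)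
            ≤ x ^ τ * (2 * (c * (x ^ (-τ) * z ^ τ)) * g z) :=
              mul_le_mul_of_nonneg_left (mul_le_mul_of_nonneg_right h1 hgz) hxτ.le
          _ = 2 * c * (z ^ τ * g z) := by
              rw [Real.rpow_neg hx0.le]; field_simp
          _ ≤ (2*c + A * Y' ^ τ * (1+z)) * (z ^ τ * g z) := by
              refine mul_le_mul_of_nonneg_right ?_ (by positivity)
              have : 0 ≤ A * Y' ^ τ * (1+z) := by positivity
              linarith
      · -- small x/z : use the Lévy bound
        have hq : 0 < x/z := div_pos hx0 hz
        have hminpos : 0 < min 1 (x/z) := lt_min one_pos hq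
        have hrle : r (x/z) ≤ A / min 1 (x/z) := by
          rw [le_div_iff₀ hminpos]; exact hlev _ hq
        have hrle2 : r (x/z) ≤ A * (1+z) := by
          refine hrle.trans ?_
          rcases le_total 1 (x/z) with h | h
          · rw [min_eq_left h, div_one]
            nlinarith [mul_nonneg hA0 hz.le]
          · rw [min_eq_right h]
            have h3 : A / (x/z) = A * z / x := by field_simp
            rw [h3]
            have h4 : A * z / x ≤ A * z := by
              apply div_le_self (by positivity) hx1
            nlinarith [mul_nonneg hA0 hz.le]
        have hxY : x ^ τ ≤ Y' ^ τ * z ^ τ := by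
          have hxlt : x ≤ Y' * z := le_of_lt ((div_lt_iff₀ hz).mp hcase)
          calc x ^ τ ≤ (Y' * z) ^ τ := Real.rpow_le_rpow hx0.le hxlt hτ.le
            _ = Y' ^ τ * z ^ τ := Real.mul_rpow hY'0.le hz.le
        calc x ^ τ * (r (x/z) * g z)
            ≤ (Y' ^ τ * z ^ τ) * ((A * (1+z)) * g z) := by
              refine mul_le_mul hxY (mul_le_mul_of_nonneg_right hrle2 hgz) ?_ ?_
              · exact mul_nonneg (hr0 _) hgz
              · positivity
          _ = (A * Y' ^ τ * (1+z)) * (z ^ τ * g z) := by ring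
          _ ≤ (2*c + A * Y' ^ τ * (1+z)) * (z ^ τ * g z) := by
              refine mul_le_mul_of_nonneg_right ?_ (by positivity)
              linarith
    · -- integrability of bound
      have hint1 : IntegrableOn (fun z : ℝ => z ^ (τ + (-(1:ℝ)/2)) * Real.exp (-z/2))
          (Set.Ioi 0) := stmt6_aux_int _ (by linarith)
      have hint2 : IntegrableOn (fun z : ℝ => z ^ (1 + (τ + (-(1:ℝ)/2))) * Real.exp (-z/2))
          (Set.Ioi 0) := stmt6_aux_int _ (by linarith)
      have hI : IntegrableOn (fun z : ℝ =>
          ((2*c + A * Y' ^ τ) * K) * (z ^ (τ + (-(1:ℝ)/2)) * Real.exp (-z/2))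
          + (A * Y' ^ τ * K) * (z ^ (1 + (τ + (-(1:ℝ)/2))) * Real.exp (-z/2))) (Set.Ioi 0) :=
        (hint1.const_mul _).add (hint2.const_mul _)
      refine hI.congr_fun (fun z hz => ?_) measurableSet_Ioi
      simp only [Set.mem_Ioi] at hz
      have e1 : z ^ (τ + (-(1:ℝ)/2)) = z ^ τ * z ^ (-(1:ℝ)/2) := Real.rpow_add hz _ _
      have e2 : z ^ (1 + (τ + (-(1:ℝ)/2))) = z * (z ^ τ * z ^ (-(1:ℝ)/2)) := by
        rw [Real.rpow_add hz, Real.rpow_one, e1]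
      beta_reduce; rw [e1, e2, hg_def]
      ring
    · -- pointwise limit
      rw [ae_restrict_iff' measurableSet_Ioi]
      refine Eventually.of_forall (fun z hz => ?_)
      simp only [Set.mem_Ioi] at hz
      have hdiv : Tendsto (fun x : ℝ => x / z) atTop atTop := tendsto_id.atTop_div_const hz
      have h1 := (htail.comp hdiv).mul_const (c * (z ^ τ * g z))
      rw [one_mul] at h1
      refine Tendsto.congr' ?_ h1
      filter_upwards [eventually_gt_atTop 0] with x hx
      show r (x/z) / (c * (x/z) ^ (-τ)) * (c * (z ^ τ * g z)) = x ^ τ * (r (x/z) * g z)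
      have hxz : (x / z) ^ (-τ) = x ^ (-τ) * z ^ τ := by
        rw [Real.div_rpow hx.le hz.le, Real.rpow_neg hz.le, div_inv_eq_mul]
      rw [hxz, Real.rpow_neg hx.le]
      have h1' : x ^ τ ≠ 0 := (Real.rpow_pos_of_pos hx τ).ne'
      have h2' : z ^ τ ≠ 0 := (Real.rpow_pos_of_pos hz τ).ne'
      field_simp
  -- value of the limit integral
  have hval : (∫ z in Set.Ioi (0:ℝ), c * (z ^ τ * g z)) = D := by
    have hcongr : ∀ z ∈ Set.Ioi (0:ℝ),
        c * (z ^ τ * g z) = (c * K) * (z ^ (τ + 1/2 - 1) * Real.exp (-z/2)) := by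
      intro z hz
      simp only [Set.mem_Ioi] at hz
      have e1 : z ^ (τ + 1/2 - 1) = z ^ τ * z ^ (-(1:ℝ)/2) := by
        rw [show τ + 1/2 - 1 = τ + (-(1:ℝ)/2) by ring, Real.rpow_add hz]
      rw [e1, hg_def]; ring
    rw [setIntegral_congr_fun measurableSet_Ioi hcongr, integral_const_mul,
      stmt6_aux_val (τ + 1/2) (by positivity)]
    have h1 : Real.sqrt (2 * Real.pi) = Real.sqrt 2 * Real.sqrt Real.pi :=
      Real.sqrt_mul (by norm_num) _
    have h2 : (2:ℝ) ^ (τ + 1/2) = 2 ^ τ * Real.sqrt 2 := by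
      rw [Real.rpow_add (by norm_num), ← Real.sqrt_eq_rpow]
    have h3 : Real.sqrt 2 ≠ 0 := by positivity
    have h4 : Real.sqrt Real.pi ≠ 0 := by positivity
    rw [hD_def, hK_def, h1, h2]
    field_simp
  rw [hval] at hDCT
  have hD0 : 0 < D := by
    have h1 : 0 < Real.Gamma (τ + 1/2) := Real.Gamma_pos_of_pos (by positivity)
    have h2 : (0:ℝ) < (2:ℝ) ^ τ := Real.rpow_pos_of_pos two_pos τ
    have h3 : (0:ℝ) < Real.sqrt Real.pi := Real.sqrt_pos.mpr Real.pi_pos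
    positivity
  have hfinal := hDCT.div_const D
  rw [div_self hD0.ne'] at hfinal
  suffices hsuff : Tendsto (fun x : ℝ =>
      (∫ z in Set.Ioi (0:ℝ), r (x/z) * g z) / (D * x ^ (-τ))) atTop (𝓝 1) from hsuff
  refine Tendsto.congr' ?_ hfinal
  filter_upwards [eventually_gt_atTop 0] with x hx
  have hI : (∫ z in Set.Ioi (0:ℝ), x ^ τ * (r (x/z) * g z))
      = x ^ τ * ∫ z in Set.Ioi (0:ℝ), r (x/z) * g z := integral_const_mul _ _
  rw [hI]
  have hxτ : x ^ τ ≠ 0 := (Real.rpow_pos_of_pos hx τ).ne'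
  have halg : ∀ I : ℝ, (x ^ τ * I) / D = I / (D * x ^ (-τ)) := by
    intro I
    rw [Real.rpow_neg hx.le]
    field_simp
  exact halg _
end

section
/- Let (X_{p,j}) be a triangular array of nonnegative random variables, iid within each row, such that Σ_{j=1}^p X_{p,j} converges in distribution to ID(a, ρ). Then for every κ ∈ (0,1), the ⌊κp⌋-th largest order statistic X_{p,(⌊κp⌋)} converges in probability to 0 as p → ∞. -/
open MeasureTheory ProbabilityTheory Filter Topology

noncomputable section

def IsID (μ : Measure ℝ) (a : ℝ) (ρ : Measure ℝ) : Prop :=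
  ∀ t : ℝ, 0 ≤ t →
    ∫ x, Real.exp (-(t * x)) ∂μ =
      Real.exp (-(t * a) - ∫ w, (1 - Real.exp (-(t * w))) ∂ρ)

def TendstoInDist {Ω : Type*} [MeasurableSpace Ω] (P : Measure Ω)
    (S : ℕ → Ω → ℝ) (μ : Measure ℝ) : Prop :=
  ∀ f : BoundedContinuousFunction ℝ ℝ,
    Tendsto (fun p => ∫ ω, f (S p ω) ∂P) atTop (𝓝 (∫ x, f x ∂μ))

def orderStatDesc (l : List ℝ) (k : ℕ) : ℝ :=
  (l.insertionSort (· ≥ ·)).getD (k - 1) 0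

lemma aux_len_mul_le_sum (L : List ℝ) (ε : ℝ) (h : ∀ x ∈ L, ε ≤ x) :
    (L.length : ℝ) * ε ≤ L.sum := by
  induction L with
  | nil => simp
  | cons a t ih =>
    have ha := h a List.mem_cons_self
    have := ih (fun x hx => h x (List.mem_cons_of_mem _ hx))
    simp only [List.length_cons, List.sum_cons]
    push_cast
    nlinarith

lemma orderStatDesc_nonneg (l : List ℝ) (hl : ∀ x ∈ l, 0 ≤ x) (k : ℕ) :
    0 ≤ orderStatDesc l k := by
  rw [orderStatDesc]
  rcases lt_or_ge (k - 1) (l.insertionSort (· ≥ ·)).length with hlt | hge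
  · rw [List.getD_eq_getElem _ _ hlt]
    exact hl _ ((l.perm_insertionSort (· ≥ ·)).mem_iff.mp (List.getElem_mem _))
  · rw [List.getD_eq_default _ _ hge]

lemma orderStat_sum_bound (l : List ℝ) (hl : ∀ x ∈ l, 0 ≤ x) (k : ℕ)
    {ε : ℝ} (hε : 0 < ε) (h : ε ≤ orderStatDesc l k) : (k : ℝ) * ε ≤ l.sum := by
  set s := l.insertionSort (· ≥ ·) with hs
  have hperm : s.Perm l := l.perm_insertionSort _
  have hsort : s.Pairwise (· ≥ ·) := l.pairwise_insertionSort _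
  have hs0 : ∀ x ∈ s, 0 ≤ x := fun x hx => hl x (hperm.mem_iff.mp hx)
  have hlt : k - 1 < s.length := by
    by_contra hcon
    push_neg at hcon
    rw [orderStatDesc, ← hs, List.getD_eq_default _ _ hcon] at h
    linarith
  have hval : ε ≤ s.get ⟨k - 1, hlt⟩ := by
    rw [orderStatDesc, ← hs, List.getD_eq_getElem _ _ hlt] at h
    simpa using h
  have hk1 : k - 1 + 1 ≤ s.length := hlt
  have htake : ∀ x ∈ s.take (k - 1 + 1), ε ≤ x := by
    intro x hx
    obtain ⟨i, hi, hix⟩ := List.mem_take_iff_getElem.mp hx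
    have hi1 : i < k - 1 + 1 := lt_of_lt_of_le hi (min_le_left _ _)
    have hi2 : i < s.length := lt_of_lt_of_le hi (min_le_right _ _)
    have hrel : s.get ⟨k - 1, hlt⟩ ≤ s.get ⟨i, hi2⟩ :=
      hsort.rel_get_of_le (by simp [Fin.le_def]; omega)
    rw [← hix]
    calc ε ≤ s.get ⟨k - 1, hlt⟩ := hval
      _ ≤ s.get ⟨i, hi2⟩ := hrel
      _ = s[i] := by simp
  have hlen : ((s.take (k - 1 + 1)).length : ℝ) = (k - 1 + 1 : ℕ) := by
    rw [List.length_take]; congr 1; omega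
  have h1 : ((k - 1 + 1 : ℕ) : ℝ) * ε ≤ (s.take (k - 1 + 1)).sum := by
    rw [← hlen]; exact aux_len_mul_le_sum _ _ htake
  have h2 : (0:ℝ) ≤ (s.drop (k - 1 + 1)).sum :=
    List.sum_nonneg (fun x hx => hs0 x (List.mem_of_mem_drop hx))
  have h3 : (s.take (k - 1 + 1)).sum + (s.drop (k - 1 + 1)).sum = s.sum :=
    List.sum_take_add_sum_drop s _
  have h4 : s.sum = l.sum := hperm.sum_eq
  have hk' : (k : ℝ) ≤ ((k - 1 + 1 : ℕ) : ℝ) := by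
    have : k ≤ k - 1 + 1 := by omega
    exact_mod_cast this
  nlinarith

/-- If the row sums of a nonnegative triangular array converge in distribution to
`ID(a,ρ)`, then for every `κ ∈ (0,1)` the `⌊κp⌋`-th largest order statistic of row `p`
converges in probability to `0`. -/
theorem stmt_13 {Ω : Type*} [MeasurableSpace Ω] (P : Measure Ω) [IsProbabilityMeasure P]
    (X : ℕ → ℕ → Ω → ℝ)
    (hmeas : ∀ p j, Measurable (X p j))
    (hnonneg : ∀ p j ω, 0 ≤ X p j ω)
    (hindep : ∀ p, iIndepFun (X p) P)
    (hident : ∀ p i j, IdentDistrib (X p i) (X p j) P P)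
    (a : ℝ) (ha : 0 ≤ a) (ρ : Measure ℝ) (hρ : IsLevyMeasure ρ)
    (μlim : Measure ℝ) (hprob : IsProbabilityMeasure μlim) (hID : IsID μlim a ρ)
    (hconv : TendstoInDist P (fun p ω => ∑ j ∈ Finset.range p, X p j ω) μlim) :
    ∀ κ : ℝ, κ ∈ Set.Ioo (0 : ℝ) 1 →
      TendstoInMeasure P
        (fun p ω => orderStatDesc ((List.range p).map fun j => X p j ω) ⌊κ * p⌋₊)
        atTop (fun _ => 0) := by
  intro κ hκ
  set S : ℕ → Ω → ℝ := fun p ω => ∑ j ∈ Finset.range p, X p j ω with hS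
  have hSmeas : ∀ p, Measurable (S p) :=
    fun p => Finset.measurable_sum _ (fun j _ => hmeas p j)
  -- laws of the row sums as probability measures
  have hmapprob : ∀ p, IsProbabilityMeasure (P.map (S p)) :=
    fun p => Measure.isProbabilityMeasure_map (hSmeas p).aemeasurable
  let ν : ℕ → ProbabilityMeasure ℝ := fun p => ⟨P.map (S p), hmapprob p⟩
  let μ : ProbabilityMeasure ℝ := ⟨μlim, hprob⟩
  have hνtend : Tendsto ν atTop (𝓝 μ) := by
    rw [ProbabilityMeasure.tendsto_iff_forall_integral_tendsto]
    intro f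
    have heq : ∀ p, ∫ x, f x ∂((ν p : Measure ℝ)) = ∫ ω, f (S p ω) ∂P := fun p =>
      integral_map (hSmeas p).aemeasurable f.continuous.measurable.aestronglyMeasurable
    simp only [heq]
    exact hconv f
  rw [tendstoInMeasure_iff_dist]
  intro ε hε
  rw [ENNReal.tendsto_atTop_zero]
  intro δ hδ
  -- choose a threshold M = n₀ with μlim (Ici M) < δ
  have hIciTendsto : Tendsto (fun n : ℕ => μlim (Set.Ici (n : ℝ))) atTop (𝓝 0) := by
    have hInter : ⋂ n : ℕ, Set.Ici ((n : ℝ)) = ∅ := by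
      ext x
      simp only [Set.mem_iInter, Set.mem_Ici, Set.mem_empty_iff_false, iff_false, not_forall,
        not_le]
      obtain ⟨n, hn⟩ := exists_nat_gt x
      exact ⟨n, hn⟩
    have := MeasureTheory.tendsto_measure_iInter_atTop (μ := μlim)
      (s := fun n : ℕ => Set.Ici ((n : ℝ)))
      (fun n => measurableSet_Ici.nullMeasurableSet)
      (fun m n hmn => Set.Ici_subset_Ici.mpr (by exact_mod_cast hmn))
      ⟨0, measure_ne_top _ _⟩
    rwa [hInter, measure_empty] at this
  obtain ⟨n₀, hn₀⟩ := (hIciTendsto.eventually_lt_const hδ).exists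
  -- by portmanteau, the laws eventually give the closed set Ici n₀ measure < δ
  have hlimsup : (atTop.limsup fun p => (ν p : Measure ℝ) (Set.Ici ((n₀ : ℝ)))) ≤
      (μ : Measure ℝ) (Set.Ici ((n₀ : ℝ))) :=
    ProbabilityMeasure.limsup_measure_closed_le_of_tendsto hνtend isClosed_Ici
  have hevent1 : ∀ᶠ p in atTop, (ν p : Measure ℝ) (Set.Ici ((n₀ : ℝ))) < δ :=
    Filter.eventually_lt_of_limsup_lt (lt_of_le_of_lt hlimsup hn₀)
  -- eventually ⌊κ p⌋ ε ≥ n₀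
  have hfloor : Tendsto (fun p : ℕ => ((⌊κ * p⌋₊ : ℝ)) * ε) atTop atTop := by
    have h1 : Tendsto (fun p : ℕ => κ * (p : ℝ)) atTop atTop :=
      (tendsto_natCast_atTop_atTop).const_mul_atTop hκ.1
    have h2 : Tendsto (fun p : ℕ => ⌊κ * (p : ℝ)⌋₊) atTop atTop :=
      (tendsto_nat_floor_atTop).comp h1
    exact (tendsto_natCast_atTop_atTop.comp h2).atTop_mul_const hε
  have hevent2 : ∀ᶠ p : ℕ in atTop, (n₀ : ℝ) ≤ ((⌊κ * (p:ℝ)⌋₊ : ℝ)) * ε :=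
    hfloor.eventually_ge_atTop _
  have hevent : ∀ᶠ p in atTop,
      P {ω | ε ≤ dist (orderStatDesc ((List.range p).map fun j => X p j ω) ⌊κ * p⌋₊)
          ((fun _ : Ω => (0:ℝ)) ω)} ≤ δ := by
    filter_upwards [hevent1, hevent2] with p h1 h2
    have hsub : {ω | ε ≤ dist (orderStatDesc ((List.range p).map fun j => X p j ω) ⌊κ * p⌋₊)
          ((fun _ : Ω => (0:ℝ)) ω)} ⊆ S p ⁻¹' Set.Ici ((n₀ : ℝ)) := by
      intro ω hω
      simp only [Set.mem_setOf_eq, Real.dist_eq, sub_zero] at hω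
      have hl0 : ∀ x ∈ (List.range p).map fun j => X p j ω, 0 ≤ x := by
        intro x hx
        obtain ⟨j, _, rfl⟩ := List.mem_map.mp hx
        exact hnonneg p j ω
      have habs : ε ≤ orderStatDesc ((List.range p).map fun j => X p j ω) ⌊κ * p⌋₊ := by
        rwa [abs_of_nonneg (orderStatDesc_nonneg _ hl0 _)] at hω
      have hsum := orderStat_sum_bound _ hl0 _ hε habs
      have hlsum : ((List.range p).map fun j => X p j ω).sum = S p ω := rfl
      simp only [Set.mem_preimage, Set.mem_Ici]
      calc (n₀ : ℝ) ≤ ((⌊κ * p⌋₊ : ℝ)) * ε := h2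
        _ ≤ S p ω := by rw [← hlsum]; exact hsum
    calc P _ ≤ P (S p ⁻¹' Set.Ici ((n₀ : ℝ))) := measure_mono hsub
      _ = (P.map (S p)) (Set.Ici ((n₀ : ℝ))) :=
        (Measure.map_apply (hSmeas p) measurableSet_Ici).symm
      _ ≤ δ := le_of_lt h1
  exact eventually_atTop.mp hevent

end
end

section
/- Let (X_{p,j}) be a triangular array of nonnegative random variables, iid within each row, such that Σ_{j=1}^p X_{p,j} converges in distribution to ID(0, ρ) (drift zero). Then for every κ ∈ (0,1), the sum of all values at or below the ⌊κp⌋-th largest order statistic, Σ_{j=1}^p X_{p,j}·1{X_{p,j} ≤ X_{p,(⌊κp⌋)}}, converges in probability to 0 as p → ∞. -/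
open MeasureTheory ProbabilityTheory Filter Topology
open scoped ENNReal

noncomputable section

namespace Stmt14Aux

lemma one_sub_exp_ge {u : ℝ} (h0 : 0 ≤ u) (h1 : u ≤ 1) : u / 3 ≤ 1 - Real.exp (-u) := by
  have h2 : u + 1 ≤ Real.exp u := Real.add_one_le_exp u
  have h3 : Real.exp u ≤ 3 := by
    calc Real.exp u ≤ Real.exp 1 := Real.exp_le_exp.2 h1
    _ ≤ 3 := by nlinarith [Real.exp_one_lt_d9]
  have h4 : (0:ℝ) < Real.exp u := Real.exp_pos u
  have h5 : Real.exp (-u) * Real.exp u = 1 := by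
    rw [← Real.exp_add]; simp
  nlinarith [Real.exp_pos (-u), mul_nonneg h0 (sub_nonneg.2 h3)]

lemma countP_map_range {α : Type*} (f : ℕ → α) (q : α → Bool) :
    ∀ p, ((List.range p).map f).countP q = ∑ j ∈ Finset.range p, (if q (f j) then 1 else 0)
  | 0 => by simp
  | (p+1) => by
      rw [List.range_succ, List.map_append, List.countP_append, countP_map_range f q p,
        Finset.sum_range_succ]
      simp [List.countP_cons]

lemma le_countP_of_lt_orderStat {l : List ℝ} {δ : ℝ} {k : ℕ} (hk1 : 1 ≤ k)
    (hk2 : k ≤ l.length) (h : δ < orderStatDesc l k) :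
    k ≤ l.countP (fun x => decide (δ < x)) := by
  set l' := l.insertionSort (· ≥ ·) with hl'
  have hperm : l'.Perm l := l.perm_insertionSort _
  have hlen : l'.length = l.length := hperm.length_eq
  have hsort : l'.Pairwise (· ≥ ·) := List.pairwise_insertionSort _ l
  rw [← hperm.countP_eq]
  have hk2' : k - 1 < l'.length := by omega
  have hgetd : orderStatDesc l k = l'.get ⟨k-1, hk2'⟩ := by
    rw [orderStatDesc, ← hl', List.getD_eq_getElem l' 0 hk2']
    rfl
  have htake : ∀ x ∈ l'.take k, (fun x => decide (δ < x)) x = true := by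
    intro x hx
    obtain ⟨i, hi, rfl⟩ := List.getElem_of_mem hx
    rw [List.length_take] at hi
    have hi' : i < l'.length := by omega
    rw [List.getElem_take]
    have hrel : l'.get ⟨i, hi'⟩ ≥ l'.get ⟨k-1, hk2'⟩ :=
      hsort.rel_get_of_le (by simp; omega)
    simp only [decide_eq_true_eq]
    have : δ < l'.get ⟨k-1, hk2'⟩ := hgetd ▸ h
    exact lt_of_lt_of_le this (by simpa using hrel)
  calc k = (l'.take k).length := by rw [List.length_take]; omega
    _ = (l'.take k).countP (fun x => decide (δ < x)) := (List.countP_eq_length.2 htake).symm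
    _ ≤ l'.countP (fun x => decide (δ < x)) := (l'.take_sublist k).countP_le

lemma small_le (n : ℕ) (hn : 1 ≤ n) {x : ℝ} (hx : 0 ≤ x) :
    (if x ≤ 1/(n:ℝ) then x else 0) ≤ 3/(n:ℝ) * (1 - Real.exp (-((n:ℝ)*x))) := by
  have hn' : (0:ℝ) < n := by exact_mod_cast hn
  have hexp : Real.exp (-((n:ℝ)*x)) ≤ 1 := by
    rw [← Real.exp_zero]; exact Real.exp_le_exp.2 (by nlinarith)
  split_ifs with h
  · have hu1 : (n:ℝ)*x ≤ 1 := by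
      calc (n:ℝ)*x = x*(n:ℝ) := mul_comm _ _
        _ ≤ 1 := (le_div_iff₀ hn').1 h
    have key := one_sub_exp_ge (mul_nonneg hn'.le hx) hu1
    calc x = 3/(n:ℝ) * (((n:ℝ)*x)/3) := by field_simp
    _ ≤ 3/(n:ℝ) * (1 - Real.exp (-((n:ℝ)*x))) := by
        apply mul_le_mul_of_nonneg_left key (by positivity)
  · have : (0:ℝ) ≤ 1 - Real.exp (-((n:ℝ)*x)) := by linarith
    positivity

/-- A bounded continuous version of `x ↦ exp (-(t x))` (capped at 1). -/
def expBCF (t : ℝ) : BoundedContinuousFunction ℝ ℝ :=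
  BoundedContinuousFunction.ofNormedAddCommGroup (fun x => min 1 (Real.exp (-(t*x))))
    (continuous_const.min (Real.continuous_exp.comp (continuous_const.mul continuous_id).neg)) 1
    (fun x => by
      rw [Real.norm_eq_abs, abs_le]
      constructor
      · have : (0:ℝ) ≤ min 1 (Real.exp (-(t*x))) :=
          le_min zero_le_one (Real.exp_pos _).le
        linarith
      · exact min_le_left _ _)

lemma expBCF_apply (t x : ℝ) : expBCF t x = min 1 (Real.exp (-(t*x))) := rfl

lemma expBCF_eq {t x : ℝ} (ht : 0 ≤ t) (hx : 0 ≤ x) :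
    expBCF t x = Real.exp (-(t*x)) := by
  rw [expBCF_apply]
  exact min_eq_right (by rw [← Real.exp_zero]; exact Real.exp_le_exp.2 (by nlinarith))

/-- A bounded continuous function which is 1 on `(-∞, -1/c]` and 0 on `[0,∞)`. -/
def negBCF (c : ℝ) : BoundedContinuousFunction ℝ ℝ :=
  BoundedContinuousFunction.ofNormedAddCommGroup (fun x => min 1 (max 0 (-(c*x))))
    (continuous_const.min (continuous_const.max (continuous_const.mul continuous_id).neg)) 1
    (fun x => by
      rw [Real.norm_eq_abs, abs_le]
      constructor
      · have : (0:ℝ) ≤ min 1 (max 0 (-(c*x))) := le_min zero_le_one (le_max_left _ _)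
        linarith
      · exact min_le_left _ _)

lemma negBCF_apply (c x : ℝ) : negBCF c x = min 1 (max 0 (-(c*x))) := rfl

lemma negBCF_nonneg (c x : ℝ) : 0 ≤ negBCF c x :=
  le_min zero_le_one (le_max_left _ _)

lemma negBCF_eq_zero {c x : ℝ} (hc : 0 ≤ c) (hx : 0 ≤ x) : negBCF c x = 0 := by
  rw [negBCF_apply, max_eq_left (by nlinarith), min_eq_right zero_le_one]

lemma negBCF_eq_one {c x : ℝ} (h : 1 ≤ -(c*x)) : negBCF c x = 1 := by
  rw [negBCF_apply, max_eq_right (by linarith), min_eq_left h]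

end Stmt14Aux

set_option maxHeartbeats 2000000 in
/-- If the row sums of a nonnegative triangular array converge in distribution to
`ID(0,ρ)` (zero drift), then for every `κ ∈ (0,1)` the total mass of all entries at or
below the `⌊κp⌋`-th largest value converges in probability to `0`. -/
theorem stmt_14 {Ω : Type*} [MeasurableSpace Ω] (P : Measure Ω) [IsProbabilityMeasure P]
    (X : ℕ → ℕ → Ω → ℝ)
    (hmeas : ∀ p j, Measurable (X p j))
    (hnonneg : ∀ p j ω, 0 ≤ X p j ω)
    (hindep : ∀ p, iIndepFun (X p) P)
    (hident : ∀ p i j, IdentDistrib (X p i) (X p j) P P)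
    (ρ : Measure ℝ) (hρ : IsLevyMeasure ρ)
    (μlim : Measure ℝ) (hprob : IsProbabilityMeasure μlim) (hID : IsID μlim 0 ρ)
    (hconv : TendstoInDist P (fun p ω => ∑ j ∈ Finset.range p, X p j ω) μlim) :
    ∀ κ : ℝ, κ ∈ Set.Ioo (0 : ℝ) 1 →
      TendstoInMeasure P
        (fun p ω => ∑ j ∈ Finset.range p,
          if X p j ω ≤ orderStatDesc ((List.range p).map fun i => X p i ω) ⌊κ * p⌋₊
          then X p j ω else 0)
        atTop (fun _ => 0) := by
  classical
  open Stmt14Aux in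
  have hS_nonneg : ∀ p ω, 0 ≤ ∑ j ∈ Finset.range p, X p j ω := fun p ω =>
    Finset.sum_nonneg fun j _ => hnonneg p j ω
  -- the limit measure is carried by [0, ∞)
  have hμ0 : ∀ᵐ x ∂μlim, 0 ≤ x := by
    have key : ∀ m : ℕ, μlim (Set.Iic (-(1/((m:ℝ)+1)))) = 0 := by
      intro m
      have hc0 : (0:ℝ) < (m:ℝ)+1 := by positivity
      set f := Stmt14Aux.negBCF ((m:ℝ)+1) with hf
      have h0 : ∀ p, ∫ ω, f (∑ j ∈ Finset.range p, X p j ω) ∂P = 0 := by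
        intro p
        have : ∀ ω, f (∑ j ∈ Finset.range p, X p j ω) = 0 := fun ω =>
          Stmt14Aux.negBCF_eq_zero hc0.le (hS_nonneg p ω)
        simp [this]
      have hint0 : ∫ x, f x ∂μlim = 0 := by
        have hlim : Tendsto (fun _ : ℕ => (0:ℝ)) atTop (𝓝 (∫ x, f x ∂μlim)) := by
          simpa [h0] using hconv f
        exact tendsto_nhds_unique hlim tendsto_const_nhds
      have hzero : (fun x => f x) =ᵐ[μlim] 0 :=
        (integral_eq_zero_iff_of_nonneg_ae
          (Eventually.of_forall fun x => Stmt14Aux.negBCF_nonneg _ x)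
          (f.integrable μlim)).1 hint0
      have hsub : Set.Iic (-(1/((m:ℝ)+1))) ⊆ {x | ¬ (fun x => f x) x = (0:ℝ → ℝ) x} := by
        intro x hx
        simp only [Set.mem_Iic] at hx
        have : f x = 1 := by
          apply Stmt14Aux.negBCF_eq_one
          have : ((m:ℝ)+1) * x ≤ ((m:ℝ)+1) * (-(1/((m:ℝ)+1))) :=
            mul_le_mul_of_nonneg_left hx hc0.le
          have h2 : ((m:ℝ)+1) * (-(1/((m:ℝ)+1))) = -1 := by field_simp
          linarith
        simp [this]
      exact measure_mono_null hsub (ae_iff.1 hzero)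
    have hun : Set.Iio (0:ℝ) ⊆ ⋃ m : ℕ, Set.Iic (-(1/((m:ℝ)+1))) := by
      intro x hx
      simp only [Set.mem_Iio] at hx
      obtain ⟨m, hm⟩ := exists_nat_one_div_lt (show (0:ℝ) < -x by linarith)
      exact Set.mem_iUnion.2 ⟨m, by simp only [Set.mem_Iic]; linarith⟩
    have : μlim (Set.Iio 0) = 0 :=
      measure_mono_null hun (measure_iUnion_null fun m => key m)
    filter_upwards [ae_iff.2 (show μlim {x | ¬ (0:ℝ) ≤ x} = 0 by
      convert this using 2; ext x; simp [not_le])] with x hx using hx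
  -- a.e. positivity for the Lévy measure
  have hρ_pos : ∀ᵐ w ∂ρ, 0 < w := by
    rw [ae_iff]
    refine measure_mono_null ?_ hρ.1
    intro w hw
    simp only [Set.mem_setOf_eq, not_lt] at hw
    exact hw
  -- integrability of the dominating function
  have hg₀ : Integrable (fun w => min 1 |w|) ρ := by
    refine ⟨(continuous_const.min continuous_abs).aestronglyMeasurable, ?_⟩
    rw [hasFiniteIntegral_iff_ofReal (Eventually.of_forall fun w =>
      le_min zero_le_one (abs_nonneg w))]
    have hcongr : ∀ᵐ w ∂ρ, ENNReal.ofReal (min 1 |w|) = ENNReal.ofReal (min 1 w) :=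
      hρ_pos.mono fun w hw => by rw [abs_of_pos hw]
    rw [lintegral_congr_ae hcongr]
    exact lt_of_le_of_ne le_top hρ.2
  -- the Lévy exponent and its sublinearity (zero drift)
  set ψ : ℝ → ℝ := fun t => ∫ w, (1 - Real.exp (-(t*w))) ∂ρ with hψdef
  have hψn : Tendsto (fun n : ℕ => ψ n / n) atTop (𝓝 0) := by
    have hdct := tendsto_integral_filter_of_dominated_convergence (μ := ρ)
        (l := (atTop : Filter ℕ))
        (F := fun (n:ℕ) w => (1 - Real.exp (-((n:ℝ)*w))) / (n:ℝ)) (f := fun _ => (0:ℝ))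
        (bound := fun w => min 1 |w|)
        (by
          refine Eventually.of_forall fun n => ?_
          exact ((continuous_const.sub (Real.continuous_exp.comp
            (continuous_const.mul continuous_id).neg)).div_const _).aestronglyMeasurable)
        (by
          filter_upwards [eventually_ge_atTop 1] with n hn
          filter_upwards [hρ_pos] with w hw
          have hn' : (0:ℝ) < n := by exact_mod_cast hn
          have hexp : Real.exp (-((n:ℝ)*w)) ≤ 1 := by
            rw [← Real.exp_zero]; exact Real.exp_le_exp.2 (by nlinarith)
          have hup : 1 - Real.exp (-((n:ℝ)*w)) ≤ (n:ℝ)*w := by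
            have := Real.add_one_le_exp (-((n:ℝ)*w))
            linarith
          have hnum : (0:ℝ) ≤ 1 - Real.exp (-((n:ℝ)*w)) := by
            linarith
          rw [Real.norm_eq_abs, abs_of_nonneg (div_nonneg hnum hn'.le)]
          refine le_min ?_ ?_
          · rw [div_le_one hn']
            have hn1 : (1:ℝ) ≤ (n:ℝ) := by exact_mod_cast hn
            linarith [Real.exp_pos (-((n:ℝ)*w))]
          · rw [abs_of_pos hw, div_le_iff₀ hn']
            nlinarith)
        hg₀
        (by
          filter_upwards [hρ_pos] with w hw
          refine squeeze_zero' (g := fun n : ℕ => 1/(n:ℝ))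
            (Eventually.of_forall fun n => ?_) ?_ tendsto_one_div_atTop_nhds_zero_nat
          · have hexp : Real.exp (-((n:ℝ)*w)) ≤ 1 := by
              rw [← Real.exp_zero]
              exact Real.exp_le_exp.2 (by nlinarith [(Nat.cast_nonneg n : (0:ℝ) ≤ (n:ℝ))])
            have : (0:ℝ) ≤ 1 - Real.exp (-((n:ℝ)*w)) := by linarith
            positivity
          · filter_upwards [eventually_ge_atTop 1] with n hn
            have hn' : (0:ℝ) < n := by exact_mod_cast hn
            have hexp : (0:ℝ) ≤ Real.exp (-((n:ℝ)*w)) := (Real.exp_pos _).le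
            rw [div_le_div_iff₀ hn' hn']
            nlinarith)
    have heq : ∀ n : ℕ, ∫ w, (1 - Real.exp (-((n:ℝ)*w))) / (n:ℝ) ∂ρ = ψ n / n := fun n =>
      integral_div _ _
    simpa [heq, integral_zero] using hdct
  -- convergence of Laplace transforms of the individual terms
  have hmgf_eq : ∀ (t : ℝ) (p j : ℕ), mgf (X p j) P t = mgf (X p 0) P t := by
    intro t p j
    have hu : Measurable fun x : ℝ => Real.exp (t * x) :=
      Real.measurable_exp.comp (measurable_id.const_mul t)
    exact ((hident p j 0).comp hu).integral_eq
  have hφlim : ∀ n : ℕ,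
      Tendsto (fun p => (mgf (X p 0) P (-(n:ℝ)))^p) atTop (𝓝 (Real.exp (-ψ n))) := by
    intro n
    have hnn : (0:ℝ) ≤ n := n.cast_nonneg
    have h1 : ∀ p, ∫ ω, (Stmt14Aux.expBCF n) (∑ j ∈ Finset.range p, X p j ω) ∂P
        = (mgf (X p 0) P (-(n:ℝ)))^p := by
      intro p
      calc ∫ ω, (Stmt14Aux.expBCF n) (∑ j ∈ Finset.range p, X p j ω) ∂P
          = ∫ ω, Real.exp ((-(n:ℝ)) * (∑ j ∈ Finset.range p, X p j) ω) ∂P := by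
            refine integral_congr_ae (Eventually.of_forall fun ω => ?_)
            simp only [Finset.sum_apply, Stmt14Aux.expBCF_eq hnn (hS_nonneg p ω)]
            ring_nf
        _ = mgf (∑ j ∈ Finset.range p, X p j) P (-(n:ℝ)) := rfl
        _ = ∏ j ∈ Finset.range p, mgf (X p j) P (-(n:ℝ)) := (hindep p).mgf_sum (hmeas p) _
        _ = (mgf (X p 0) P (-(n:ℝ)))^p := by
            rw [Finset.prod_congr rfl (fun j _ => hmgf_eq (-(n:ℝ)) p j),
              Finset.prod_const, Finset.card_range]
    have h2 : ∫ x, (Stmt14Aux.expBCF n) x ∂μlim = Real.exp (-ψ n) := by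
      have e1 : ∫ x, (Stmt14Aux.expBCF n) x ∂μlim = ∫ x, Real.exp (-((n:ℝ)*x)) ∂μlim :=
        integral_congr_ae (hμ0.mono fun x hx => Stmt14Aux.expBCF_eq hnn hx)
      rw [e1, hID n hnn]
      norm_num
      rfl
    have h3 := hconv (Stmt14Aux.expBCF n)
    rw [h2] at h3
    exact h3.congr h1
  -- key eventual bound: p (1 - φ_p(n)) ≤ ψ n + 1
  have hbound : ∀ n : ℕ, ∀ᶠ p : ℕ in atTop,
      (p:ℝ) * (1 - mgf (X p 0) P (-(n:ℝ))) ≤ ψ n + 1 := by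
    intro n
    have hlt : Real.exp (-(ψ n + 1)) < Real.exp (-ψ n) := Real.exp_lt_exp.2 (by linarith)
    filter_upwards [(hφlim n).eventually (eventually_gt_nhds hlt), eventually_ge_atTop 1]
      with p hp hp1
    set φ := mgf (X p 0) P (-(n:ℝ)) with hφ
    have hφ0 : 0 ≤ φ := mgf_nonneg
    have hφpos : 0 < φ := by
      rcases hφ0.lt_or_eq with h | h
      · exact h
      · exfalso
        rw [← h, zero_pow (by omega : p ≠ 0)] at hp
        exact absurd hp (not_lt.2 (Real.exp_pos _).le)
    have hlog : -(ψ n + 1) < (p:ℝ) * Real.log φ := by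
      have := Real.log_lt_log (Real.exp_pos _) hp
      rwa [Real.log_exp, Real.log_pow] at this
    have h2 : 1 - φ ≤ -Real.log φ := by linarith [Real.log_le_sub_one_of_pos hφpos]
    calc (p:ℝ) * (1 - φ) ≤ (p:ℝ) * (-Real.log φ) :=
          mul_le_mul_of_nonneg_left h2 p.cast_nonneg
      _ ≤ ψ n + 1 := by nlinarith
  -- main argument
  intro κ hκ
  obtain ⟨hκ0, hκ1⟩ := hκ
  rw [tendstoInMeasure_iff_dist]
  intro ε hε
  rw [ENNReal.tendsto_nhds_zero]
  intro η hη
  obtain ⟨r, hr0, hrη⟩ : ∃ r : ℝ, 0 < r ∧ ENNReal.ofReal r ≤ η := by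
    rcases eq_or_ne η ⊤ with h | h
    · exact ⟨1, one_pos, by simp [h]⟩
    · refine ⟨min 1 η.toReal, lt_min one_pos (ENNReal.toReal_pos hη.ne' h), ?_⟩
      calc ENNReal.ofReal (min 1 η.toReal) ≤ ENNReal.ofReal η.toReal :=
            ENNReal.ofReal_le_ofReal (min_le_right _ _)
        _ = η := ENNReal.ofReal_toReal h
  have hq0 : Tendsto (fun n : ℕ => 3*(ψ n / n) + 3*(1/(n:ℝ))) atTop (𝓝 0) := by
    have := (hψn.const_mul 3).add (tendsto_one_div_atTop_nhds_zero_nat.const_mul 3)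
    simpa using this
  obtain ⟨n, hn1, hnq⟩ : ∃ n : ℕ, 1 ≤ n ∧ 3*(ψ n / n) + 3*(1/(n:ℝ)) ≤ ε * (r/2) := by
    have h1 := hq0.eventually (eventually_le_nhds (by positivity : (0:ℝ) < ε * (r/2)))
    obtain ⟨n, hn1, hn2⟩ := ((eventually_ge_atTop 1).and h1).exists
    exact ⟨n, hn1, hn2⟩
  have hn' : (0:ℝ) < n := by exact_mod_cast hn1
  set δ : ℝ := 1/(n:ℝ) with hδdef
  have hδ0 : 0 < δ := by positivity
  set c : ℝ := 1 - Real.exp (-((n:ℝ)*δ)) with hcdef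
  have hc0 : 0 < c := by
    have : Real.exp (-((n:ℝ)*δ)) < 1 := by
      rw [← Real.exp_zero]
      apply Real.exp_lt_exp.2
      have : (n:ℝ)*δ = 1 := by rw [hδdef]; field_simp
      rw [this]; norm_num
    simp only [hcdef]; linarith
  obtain ⟨K, hK⟩ := exists_nat_ge (((ψ n + 1)/c) / (r/2))
  have hK' : (ψ n + 1)/c ≤ ((K:ℝ)+1) * (r/2) := by
    rw [div_le_iff₀ (by positivity : (0:ℝ) < r/2)] at hK
    nlinarith
  have hfloor : Tendsto (fun p : ℕ => ⌊κ * (p:ℝ)⌋₊) atTop atTop :=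
    tendsto_nat_floor_atTop.comp
      (Tendsto.const_mul_atTop hκ0 tendsto_natCast_atTop_atTop)
  filter_upwards [hbound n, hfloor.eventually_ge_atTop (K+1), eventually_ge_atTop 1]
    with p hpb hpk hp1
  set k := ⌊κ * (p:ℝ)⌋₊ with hkdef
  have hk1 : 1 ≤ k := le_trans (Nat.le_add_left 1 K) hpk
  have hkp : k ≤ p := by
    calc k ≤ ⌊(p:ℝ)⌋₊ := Nat.floor_mono (by nlinarith [(Nat.cast_nonneg p : (0:ℝ) ≤ (p:ℝ))])
      _ = p := Nat.floor_natCast p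
  -- the two dominating events
  set g : Ω → ℝ≥0∞ := fun ω =>
    ENNReal.ofReal (∑ j ∈ Finset.range p, if X p j ω ≤ δ then X p j ω else 0) with hgdef
  set Nf : Ω → ℝ≥0∞ := fun ω =>
    (((((List.range p).map fun i => X p i ω).countP fun x => decide (δ < x)) : ℕ) : ℝ≥0∞)
    with hNdef
  have hsub : {ω | ε ≤ dist (∑ j ∈ Finset.range p,
        if X p j ω ≤ orderStatDesc ((List.range p).map fun i => X p i ω) k
        then X p j ω else 0) 0}
      ⊆ {ω | ENNReal.ofReal ε ≤ g ω} ∪ {ω | (k:ℝ≥0∞) ≤ Nf ω} := by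
    intro ω hω
    simp only [Set.mem_setOf_eq, dist_zero_right, Real.norm_eq_abs] at hω
    rw [abs_of_nonneg (Finset.sum_nonneg fun j _ => by
      split_ifs; exacts [hnonneg p j ω, le_refl 0])] at hω
    by_cases hcase : δ < orderStatDesc ((List.range p).map fun i => X p i ω) k
    · right
      have hlen : ((List.range p).map fun i => X p i ω).length = p := by simp
      have hcount := Stmt14Aux.le_countP_of_lt_orderStat hk1 (by rw [hlen]; exact hkp) hcase
      simp only [Set.mem_setOf_eq, hNdef]
      exact_mod_cast hcount
    · left
      have hT : (∑ j ∈ Finset.range p,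
          if X p j ω ≤ orderStatDesc ((List.range p).map fun i => X p i ω) k
          then X p j ω else 0)
          ≤ ∑ j ∈ Finset.range p, if X p j ω ≤ δ then X p j ω else 0 := by
        apply Finset.sum_le_sum
        intro j _
        by_cases h1 : X p j ω ≤ orderStatDesc ((List.range p).map fun i => X p i ω) k
        · rw [if_pos h1, if_pos (h1.trans (not_lt.1 hcase))]
        · rw [if_neg h1]
          split_ifs
          exacts [hnonneg p j ω, le_refl 0]
      simp only [Set.mem_setOf_eq, hgdef]
      exact ENNReal.ofReal_le_ofReal (hω.trans hT)
  -- Laplace-transform expectation identity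
  have hexp_meas : Measurable fun ω => Real.exp ((-(n:ℝ)) * X p 0 ω) :=
    Real.measurable_exp.comp ((hmeas p 0).const_mul _)
  have hexp_int : Integrable (fun ω => Real.exp ((-(n:ℝ)) * X p 0 ω)) P := by
    refine Integrable.mono' (integrable_const 1) hexp_meas.aestronglyMeasurable ?_
    refine Eventually.of_forall fun ω => ?_
    rw [Real.norm_eq_abs, abs_of_pos (Real.exp_pos _), ← Real.exp_zero]
    exact Real.exp_le_exp.2 (by nlinarith [hnonneg p 0 ω, (Nat.cast_nonneg n : (0:ℝ) ≤ (n:ℝ))])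
  have hL : ∫⁻ ω, ENNReal.ofReal (1 - Real.exp (-((n:ℝ) * X p 0 ω))) ∂P
      = ENNReal.ofReal (1 - mgf (X p 0) P (-(n:ℝ))) := by
    have hint2 : Integrable (fun ω => 1 - Real.exp (-((n:ℝ) * X p 0 ω))) P := by
      simpa [neg_mul, Pi.sub_def] using (integrable_const (1:ℝ)).sub hexp_int
    rw [← ofReal_integral_eq_lintegral_ofReal hint2 (Eventually.of_forall fun ω => by
      have : Real.exp (-((n:ℝ) * X p 0 ω)) ≤ 1 := by
        rw [← Real.exp_zero]
        exact Real.exp_le_exp.2 (by nlinarith [hnonneg p 0 ω, (Nat.cast_nonneg n : (0:ℝ) ≤ (n:ℝ))])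
      simp only [Pi.zero_apply]; linarith)]
    congr 1
    rw [integral_sub (integrable_const 1) (by simpa [neg_mul] using hexp_int)]
    simp [mgf, neg_mul]
  -- part A : the small-jump sum
  have hmeas_ite : ∀ j, Measurable fun ω => ENNReal.ofReal (if X p j ω ≤ δ then X p j ω else 0) :=
    fun j => (Measurable.ite (measurableSet_le (hmeas p j) measurable_const)
      (hmeas p j) measurable_const).ennreal_ofReal
  have hmeas_exp : Measurable fun ω => ENNReal.ofReal (1 - Real.exp (-((n:ℝ) * X p 0 ω))) :=
    (measurable_const.sub (((hmeas p 0).const_mul _).neg.exp)).ennreal_ofReal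
  have hgmeas : Measurable g := by
    apply ENNReal.measurable_ofReal.comp
    apply Finset.measurable_sum
    intro j _
    exact Measurable.ite (measurableSet_le (hmeas p j) measurable_const)
      (hmeas p j) measurable_const
  have hsum_lint : ∫⁻ ω, g ω ∂P
      = (p:ℝ≥0∞) * ∫⁻ ω, ENNReal.ofReal (if X p 0 ω ≤ δ then X p 0 ω else 0) ∂P := by
    have e1 : ∀ ω, g ω
        = ∑ j ∈ Finset.range p, ENNReal.ofReal (if X p j ω ≤ δ then X p j ω else 0) := by
      intro ω
      simp only [hgdef]
      exact ENNReal.ofReal_sum_of_nonneg fun j _ => by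
        split_ifs; exacts [hnonneg p j ω, le_refl 0]
    rw [lintegral_congr e1, lintegral_finset_sum _ (fun j _ => hmeas_ite j)]
    have e2 : ∀ j ∈ Finset.range p,
        ∫⁻ ω, ENNReal.ofReal (if X p j ω ≤ δ then X p j ω else 0) ∂P
        = ∫⁻ ω, ENNReal.ofReal (if X p 0 ω ≤ δ then X p 0 ω else 0) ∂P := by
      intro j _
      have hu : Measurable fun x : ℝ => ENNReal.ofReal (if x ≤ δ then x else 0) := by
        apply ENNReal.measurable_ofReal.comp
        exact Measurable.ite measurableSet_Iic measurable_id measurable_const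
      exact ((hident p j 0).comp hu).lintegral_eq
    rw [Finset.sum_congr rfl e2, Finset.sum_const, Finset.card_range, nsmul_eq_mul]
  have hm_le : ∫⁻ ω, ENNReal.ofReal (if X p 0 ω ≤ δ then X p 0 ω else 0) ∂P
      ≤ ENNReal.ofReal (3/(n:ℝ)) * ENNReal.ofReal (1 - mgf (X p 0) P (-(n:ℝ))) := by
    rw [← hL, ← lintegral_const_mul _ hmeas_exp]
    apply lintegral_mono
    intro ω
    calc ENNReal.ofReal (if X p 0 ω ≤ δ then X p 0 ω else 0)
        ≤ ENNReal.ofReal (3/(n:ℝ) * (1 - Real.exp (-((n:ℝ) * X p 0 ω)))) :=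
          ENNReal.ofReal_le_ofReal (Stmt14Aux.small_le n hn1 (hnonneg p 0 ω))
      _ = ENNReal.ofReal (3/(n:ℝ)) * ENNReal.ofReal (1 - Real.exp (-((n:ℝ) * X p 0 ω))) :=
          ENNReal.ofReal_mul (by positivity)
  have hA : P {ω | ENNReal.ofReal ε ≤ g ω} ≤ ENNReal.ofReal (r/2) := by
    have hmark := meas_ge_le_lintegral_div (μ := P) hgmeas.aemeasurable
      (ENNReal.ofReal_pos.2 hε).ne' ENNReal.ofReal_ne_top
    refine le_trans hmark ?_
    have hnum : ∫⁻ ω, g ω ∂P ≤ ENNReal.ofReal (ε * (r/2)) := by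
      rw [hsum_lint]
      calc (p:ℝ≥0∞) * ∫⁻ ω, ENNReal.ofReal (if X p 0 ω ≤ δ then X p 0 ω else 0) ∂P
          ≤ (p:ℝ≥0∞) * (ENNReal.ofReal (3/(n:ℝ))
              * ENNReal.ofReal (1 - mgf (X p 0) P (-(n:ℝ)))) := mul_le_mul_right hm_le _
        _ = ENNReal.ofReal (3/(n:ℝ))
              * (ENNReal.ofReal (p:ℝ) * ENNReal.ofReal (1 - mgf (X p 0) P (-(n:ℝ)))) := by
            rw [ENNReal.ofReal_natCast]; ring
        _ = ENNReal.ofReal (3/(n:ℝ))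
              * ENNReal.ofReal ((p:ℝ) * (1 - mgf (X p 0) P (-(n:ℝ)))) := by
            rw [← ENNReal.ofReal_mul p.cast_nonneg]
        _ ≤ ENNReal.ofReal (3/(n:ℝ)) * ENNReal.ofReal (ψ n + 1) :=
            mul_le_mul_right (ENNReal.ofReal_le_ofReal hpb) _
        _ = ENNReal.ofReal (3/(n:ℝ) * (ψ n + 1)) :=
            (ENNReal.ofReal_mul (by positivity)).symm
        _ ≤ ENNReal.ofReal (ε * (r/2)) := by
            apply ENNReal.ofReal_le_ofReal
            have e3 : 3/(n:ℝ) * (ψ n + 1) = 3*(ψ n / n) + 3*(1/(n:ℝ)) := by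
              field_simp
            linarith [hnq, e3.le, e3.ge]
    refine ENNReal.div_le_of_le_mul ?_
    calc ∫⁻ ω, g ω ∂P ≤ ENNReal.ofReal (ε * (r/2)) := hnum
      _ = ENNReal.ofReal (r/2) * ENNReal.ofReal ε := by
          rw [← ENNReal.ofReal_mul (by positivity)]; ring_nf
  -- part B : the count of large values
  have hNf_eq : Nf = fun ω => ∑ j ∈ Finset.range p,
      Set.indicator {ω' | δ < X p j ω'} (fun _ => (1:ℝ≥0∞)) ω := by
    funext ω
    simp only [hNdef]
    rw [Stmt14Aux.countP_map_range]
    push_cast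
    refine Finset.sum_congr rfl fun j _ => ?_
    rw [Set.indicator_apply]
    by_cases h : δ < X p j ω <;> simp [h]
  have hNmeas : Measurable Nf := by
    rw [hNf_eq]
    exact Finset.measurable_sum _ fun j _ =>
      (measurable_const.indicator (measurableSet_lt measurable_const (hmeas p j)))
  have hNint : ∫⁻ ω, Nf ω ∂P = (p:ℝ≥0∞) * P {ω | δ < X p 0 ω} := by
    rw [hNf_eq, lintegral_finset_sum _ (fun j _ =>
      measurable_const.indicator (measurableSet_lt measurable_const (hmeas p j)))]
    have e2 : ∀ j ∈ Finset.range p,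
        ∫⁻ ω, Set.indicator {ω' | δ < X p j ω'} (fun _ => (1:ℝ≥0∞)) ω ∂P
        = P {ω | δ < X p 0 ω} := by
      intro j _
      rw [lintegral_indicator_const (measurableSet_lt measurable_const (hmeas p j)), one_mul]
      have := (hident p j 0).measure_mem_eq (measurableSet_Ioi (a := δ))
      simpa [Set.preimage, Set.mem_Ioi] using this
    rw [Finset.sum_congr rfl e2, Finset.sum_const, Finset.card_range, nsmul_eq_mul]
  have hq_bound : ENNReal.ofReal c * P {ω | δ < X p 0 ω}
      ≤ ENNReal.ofReal (1 - mgf (X p 0) P (-(n:ℝ))) := by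
    rw [← hL]
    calc ENNReal.ofReal c * P {ω | δ < X p 0 ω}
        = ∫⁻ ω, ENNReal.ofReal c
            * Set.indicator {ω' | δ < X p 0 ω'} (fun _ => (1:ℝ≥0∞)) ω ∂P := by
          rw [lintegral_const_mul _ (measurable_const.indicator
            (measurableSet_lt measurable_const (hmeas p 0))),
            lintegral_indicator_const (measurableSet_lt measurable_const (hmeas p 0)), one_mul]
      _ ≤ ∫⁻ ω, ENNReal.ofReal (1 - Real.exp (-((n:ℝ) * X p 0 ω))) ∂P := by
          apply lintegral_mono
          intro ω
          simp only [Set.indicator_apply]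
          by_cases h : ω ∈ {ω' | δ < X p 0 ω'}
          · rw [if_pos h, mul_one]
            apply ENNReal.ofReal_le_ofReal
            simp only [Set.mem_setOf_eq] at h
            have : Real.exp (-((n:ℝ) * X p 0 ω)) ≤ Real.exp (-((n:ℝ)*δ)) := by
              apply Real.exp_le_exp.2
              nlinarith [(Nat.cast_nonneg n : (0:ℝ) ≤ (n:ℝ))]
            simp only [hcdef]; linarith
          · rw [if_neg h, mul_zero]
            exact zero_le
  have hpq : (p:ℝ≥0∞) * P {ω | δ < X p 0 ω} ≤ ENNReal.ofReal ((ψ n + 1)/c) := by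
    have h1 : P {ω | δ < X p 0 ω}
        ≤ ENNReal.ofReal (1 - mgf (X p 0) P (-(n:ℝ))) / ENNReal.ofReal c := by
      rw [ENNReal.le_div_iff_mul_le (Or.inl (ENNReal.ofReal_pos.2 hc0).ne')
        (Or.inl ENNReal.ofReal_ne_top), mul_comm]
      exact hq_bound
    calc (p:ℝ≥0∞) * P {ω | δ < X p 0 ω}
        ≤ (p:ℝ≥0∞) * (ENNReal.ofReal (1 - mgf (X p 0) P (-(n:ℝ))) / ENNReal.ofReal c) :=
          mul_le_mul_right h1 _
      _ = (ENNReal.ofReal (p:ℝ) * ENNReal.ofReal (1 - mgf (X p 0) P (-(n:ℝ))))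
            / ENNReal.ofReal c := by
          rw [ENNReal.ofReal_natCast, mul_div_assoc]
      _ = ENNReal.ofReal ((p:ℝ) * (1 - mgf (X p 0) P (-(n:ℝ)))) / ENNReal.ofReal c := by
          rw [← ENNReal.ofReal_mul p.cast_nonneg]
      _ ≤ ENNReal.ofReal (ψ n + 1) / ENNReal.ofReal c := by
          gcongr
      _ = ENNReal.ofReal ((ψ n + 1)/c) := (ENNReal.ofReal_div_of_pos hc0).symm
  have hB : P {ω | (k:ℝ≥0∞) ≤ Nf ω} ≤ ENNReal.ofReal (r/2) := by
    have hmark := meas_ge_le_lintegral_div (μ := P) hNmeas.aemeasurable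
      (by exact_mod_cast Nat.cast_ne_zero.2 (by omega : k ≠ 0) : (k:ℝ≥0∞) ≠ 0)
      (ENNReal.natCast_ne_top k)
    refine le_trans hmark ?_
    rw [hNint]
    calc (p:ℝ≥0∞) * P {ω | δ < X p 0 ω} / (k:ℝ≥0∞)
        ≤ ENNReal.ofReal ((ψ n + 1)/c) / (k:ℝ≥0∞) := by gcongr
      _ ≤ ENNReal.ofReal ((ψ n + 1)/c) / ((K+1 : ℕ):ℝ≥0∞) := by
          gcongr
      _ ≤ ENNReal.ofReal (r/2) := by
          apply ENNReal.div_le_of_le_mul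
          rw [show (((K+1 : ℕ)):ℝ≥0∞) = ENNReal.ofReal ((K:ℝ)+1) by
            rw [← ENNReal.ofReal_natCast]; norm_num,
            ← ENNReal.ofReal_mul (by positivity)]
          apply ENNReal.ofReal_le_ofReal
          nlinarith
  calc P {ω | ε ≤ dist (∑ j ∈ Finset.range p,
        if X p j ω ≤ orderStatDesc ((List.range p).map fun i => X p i ω) k
        then X p j ω else 0) ((fun _ => (0:ℝ)) ω)}
      ≤ P ({ω | ENNReal.ofReal ε ≤ g ω} ∪ {ω | (k:ℝ≥0∞) ≤ Nf ω}) := measure_mono hsub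
    _ ≤ P {ω | ENNReal.ofReal ε ≤ g ω} + P {ω | (k:ℝ≥0∞) ≤ Nf ω} := measure_union_le _ _
    _ ≤ ENNReal.ofReal (r/2) + ENNReal.ofReal (r/2) := add_le_add hA hB
    _ = ENNReal.ofReal r := by
        rw [← ENNReal.ofReal_add (by positivity) (by positivity)]; norm_num
    _ ≤ η := hrη

end
end

section
/- Every continuous function g from the one-point compactification of the cone K_d of d×d real positive semi-definite matrices to ℝ can be uniformly approximated by finite linear combinations of functions x ↦ exp(-⟨x, θ⟩) with θ ∈ K_d, where ⟨·,·⟩ is the trace inner product. -/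
open scoped Topology
open Matrix Filter

variable {d : ℕ}

abbrev Mat (d : ℕ) := Matrix (Fin d) (Fin d) ℝ
abbrev KK (d : ℕ) := {A : Mat d // A.PosSemidef}


lemma sw_isClosed_psd : IsClosed {A : Mat d | A.PosSemidef} := by
  have h1 : IsClosed {A : Mat d | A.IsHermitian} := by
    have : Continuous fun A : Mat d => Aᴴ := continuous_id.matrix_conjTranspose
    exact isClosed_eq this continuous_id
  have h2 : ∀ v : Fin d → ℝ, IsClosed {A : Mat d | 0 ≤ dotProduct (star v) (A *ᵥ v)} := by
    intro v
    exact isClosed_le continuous_const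
      (continuous_const.dotProduct (continuous_id.matrix_mulVec continuous_const))
  have : {A : Mat d | A.PosSemidef} =
      {A : Mat d | A.IsHermitian} ∩ ⋂ v, {A : Mat d | 0 ≤ dotProduct (star v) (A *ᵥ v)} := by
    ext A
    simp only [Set.mem_setOf_eq, Set.mem_inter_iff, Set.mem_iInter]
    exact ⟨fun h => ⟨h.1, h.dotProduct_mulVec_nonneg⟩, fun h => PosSemidef.of_dotProduct_mulVec_nonneg h.1 h.2⟩
  rw [this]
  exact h1.inter (isClosed_iInter h2)

lemma sw_single_quad (x : Mat d) (a b : Fin d) :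
    dotProduct (Pi.single a 1) (x *ᵥ (Pi.single b 1)) = x a b := by
  simp [Matrix.mulVec_single, single_dotProduct]

lemma sw_diag_nonneg {x : Mat d} (hx : x.PosSemidef) (i : Fin d) : 0 ≤ x i i := by
  have := hx.dotProduct_mulVec_nonneg (Pi.single i 1)
  simpa [sw_single_quad] using this

lemma sw_diag_le_trace {x : Mat d} (hx : x.PosSemidef) (i : Fin d) : x i i ≤ x.trace := by
  rw [Matrix.trace]
  exact Finset.single_le_sum (fun j _ => sw_diag_nonneg hx j) (Finset.mem_univ i)

lemma sw_trace_nonneg {x : Mat d} (hx : x.PosSemidef) : 0 ≤ x.trace :=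
  Finset.sum_nonneg fun i _ => sw_diag_nonneg hx i

lemma sw_trace_mul_nonneg {x y : Mat d} (hx : x.PosSemidef) (hy : y.PosSemidef) :
    0 ≤ (x * y).trace := by
  obtain ⟨C, rfl⟩ : ∃ C : Mat d, x = star C * C := by
    open scoped MatrixOrder in exact CStarAlgebra.nonneg_iff_eq_star_mul_self.mp hx.nonneg
  rw [Matrix.mul_assoc, Matrix.trace_mul_comm]

  exact sw_trace_nonneg (hy.mul_mul_conjTranspose_same C)

lemma sw_entry_abs_le {x : Mat d} (hx : x.PosSemidef) (i j : Fin d) : |x i j| ≤ x.trace := by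
  have key : ∀ s : ℝ, s = 1 ∨ s = -1 →
      0 ≤ x i i + x j j + s * (2 * x i j) := by
    rintro s hs
    have hsym : x j i = x i j := by
      calc x j i = xᴴ i j := by simp [Matrix.conjTranspose_apply]
      _ = x i j := by rw [hx.1]
    have h := hx.dotProduct_mulVec_nonneg ((Pi.single i 1 : Fin d → ℝ) + s • (Pi.single j 1 : Fin d → ℝ))
    have hstar : star ((Pi.single i 1 : Fin d → ℝ) + s • (Pi.single j 1 : Fin d → ℝ)) =
        (Pi.single i 1 : Fin d → ℝ) + s • (Pi.single j 1 : Fin d → ℝ) := by simp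
    rw [hstar, Matrix.mulVec_add, Matrix.mulVec_smul, dotProduct_add, add_dotProduct,
      add_dotProduct, dotProduct_smul, smul_dotProduct, smul_dotProduct,
      dotProduct_smul] at h
    simp only [sw_single_quad, smul_eq_mul, hsym] at h
    have hs2 : s * s = 1 := by rcases hs with rfl | rfl <;> norm_num
    have hss : s * (s * x j j) = x j j := by rw [← mul_assoc, hs2, one_mul]
    rw [hss] at h
    linarith
  have h1 := key 1 (Or.inl rfl)
  have h2 := key (-1) (Or.inr rfl)
  have habs : 2 * |x i j| ≤ x i i + x j j := by
    rcases abs_cases (x i j) with ⟨he, _⟩ | ⟨he, _⟩ <;> rw [he] <;> nlinarith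
  have hi := sw_diag_le_trace hx i
  have hj := sw_diag_le_trace hx j
  have ht := sw_trace_nonneg hx
  linarith [abs_nonneg (x i j)]

lemma sw_isCompact_slice (M : ℝ) :
    IsCompact {x : Mat d | x.PosSemidef ∧ x.trace ≤ M} := by
  have hbox : IsCompact {x : Mat d | ∀ i, ∀ j, x i j ∈ Set.Icc (-M) M} := by
    have : {x : Mat d | ∀ i, ∀ j, x i j ∈ Set.Icc (-M) M} =
        Set.univ.pi fun i : Fin d => Set.univ.pi fun j : Fin d => Set.Icc (-M) M := by
      ext x
      constructor
      · intro h i _ j _; exact h i j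
      · intro h i j; exact h i (Set.mem_univ i) j (Set.mem_univ j)
    rw [this]
    exact isCompact_univ_pi fun i => isCompact_univ_pi fun j => isCompact_Icc
  apply hbox.of_isClosed_subset
  · exact sw_isClosed_psd.inter (isClosed_le (continuous_id.matrix_trace) continuous_const)
  · rintro x ⟨hx, hM⟩ i j
    have := sw_entry_abs_le hx i j
    have h2 : |x i j| ≤ M := le_trans this hM
    exact ⟨neg_le_of_abs_le h2, le_of_abs_le h2⟩

lemma sw_quad_expand (z : Mat d) (v : Fin d → ℝ) :
    dotProduct v (z *ᵥ v) = ∑ a, ∑ b, v a * z a b * v b := by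
  simp [dotProduct, Matrix.mulVec, Finset.mul_sum, mul_assoc]

lemma sw_posDef_add_smul (z : Mat d) (hz : z.IsHermitian) (t : ℝ)
    (ht : (∑ i, ∑ j, |z i j|) < t) : (z + t • 1).PosDef := by
  refine Matrix.PosDef.of_dotProduct_mulVec_pos ?_ ?_
  · show (z + t • 1)ᴴ = _
    rw [Matrix.conjTranspose_add, hz.eq, Matrix.conjTranspose_smul]
    simp
  · intro v hv
    have hq : dotProduct (star v) ((z + t • 1) *ᵥ v)
        = dotProduct v (z *ᵥ v) + t * dotProduct v v := by
      rw [Matrix.add_mulVec, dotProduct_add]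
      simp [Matrix.smul_mulVec, Matrix.one_mulVec, dotProduct_smul]
    rw [hq]
    set q := dotProduct v v with hqdef
    have hvv : 0 < q := by
      obtain ⟨i, hi⟩ := Function.ne_iff.mp hv
      exact Finset.sum_pos' (fun a _ => mul_self_nonneg _)
        ⟨i, Finset.mem_univ i, mul_self_pos.mpr hi⟩
    have hsq : ∀ a : Fin d, v a * v a ≤ q :=
      fun a => Finset.single_le_sum (fun b _ => mul_self_nonneg (v b)) (Finset.mem_univ a)
    have hb : ∀ a b : Fin d, -(|z a b| * q) ≤ v a * z a b * v b := by
      intro a b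
      have h1 := hsq a
      have h2 := hsq b
      have habs : |v a * z a b * v b| ≤ |z a b| * q := by
        rw [abs_mul, abs_mul, mul_comm (|v a|)]
        have hab : |v a| * |v b| ≤ q := by
          nlinarith [sq_nonneg (|v a| - |v b|), abs_mul_abs_self (v a), abs_mul_abs_self (v b)]
        calc |z a b| * |v a| * |v b| = |z a b| * (|v a| * |v b|) := by ring
        _ ≤ |z a b| * q := by
            exact mul_le_mul_of_nonneg_left hab (abs_nonneg _)
      linarith [neg_abs_le (v a * z a b * v b)]
    have hlow : -((∑ a, ∑ b, |z a b|) * q) ≤ dotProduct v (z *ᵥ v) := by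
      rw [sw_quad_expand]
      calc -((∑ a, ∑ b, |z a b|) * q) = ∑ a, ∑ b, -(|z a b| * q) := by
            rw [Finset.sum_mul]
            simp [Finset.sum_mul, Finset.sum_neg_distrib]
      _ ≤ ∑ a, ∑ b, v a * z a b * v b :=
            Finset.sum_le_sum fun a _ => Finset.sum_le_sum fun b _ => hb a b
    nlinarith [hlow, hvv]

lemma sw_exists_coercive {θ : Mat d} (hθ : θ.PosDef) :
    ∃ c : ℝ, 0 < c ∧ ∀ x : Mat d, x.PosSemidef → c * x.trace ≤ (x * θ).trace := by
  suffices h : ∃ c : ℝ, 0 < c ∧ (θ - c • 1).PosSemidef by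
    obtain ⟨c, hc, hPSD⟩ := h
    refine ⟨c, hc, fun x hx => ?_⟩
    have hkey : (x * (θ - c • 1)).trace = (x * θ).trace - c * x.trace := by
      rw [Matrix.mul_sub, Matrix.mul_smul, Matrix.mul_one, Matrix.trace_sub,
        Matrix.trace_smul, smul_eq_mul]
    have := sw_trace_mul_nonneg hx hPSD
    rw [hkey] at this
    linarith
  rcases isEmpty_or_nonempty (Fin d) with hE | hNE
  · refine ⟨1, one_pos, ?_⟩
    refine Matrix.PosSemidef.of_dotProduct_mulVec_nonneg ?_ ?_
    · show (θ - (1:ℝ) • 1)ᴴ = _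
      rw [Matrix.conjTranspose_sub, hθ.1.eq, Matrix.conjTranspose_smul,
        Matrix.conjTranspose_one]
      norm_num
    · intro v
      simp [dotProduct, Finset.univ_eq_empty]
  · set S : Set (Fin d → ℝ) := {v | dotProduct v v = 1} with hSdef
    have hScomp : IsCompact S := by
      have hclosed : IsClosed S :=
        isClosed_eq (continuous_id.dotProduct continuous_id) continuous_const
      have hsub : S ⊆ Metric.closedBall 0 1 := by
        intro v hv
        rw [Metric.mem_closedBall, dist_zero_right]
        rw [pi_norm_le_iff_of_nonneg zero_le_one]
        intro i
        rw [Real.norm_eq_abs]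
        have hle : v i * v i ≤ dotProduct v v :=
          Finset.single_le_sum (fun b _ => mul_self_nonneg (v b)) (Finset.mem_univ i)
        rw [hv] at hle
        nlinarith [abs_mul_abs_self (v i), abs_nonneg (v i)]
      exact (isCompact_closedBall 0 1).of_isClosed_subset hclosed hsub
    have hSne : S.Nonempty := by
      obtain ⟨i₀⟩ := hNE
      refine ⟨Pi.single i₀ 1, ?_⟩
      show dotProduct _ _ = 1
      rw [single_dotProduct, one_mul, Pi.single_eq_same]
    have hf : Continuous fun v : Fin d → ℝ => dotProduct v (θ *ᵥ v) :=
      continuous_id.dotProduct (continuous_const.matrix_mulVec continuous_id)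
    obtain ⟨v₀, hv₀S, hmin'⟩ := hScomp.exists_isMinOn hSne hf.continuousOn
    set c := dotProduct v₀ (θ *ᵥ v₀) with hcdef
    have hv₀ne : v₀ ≠ 0 := by
      intro h0
      rw [hSdef] at hv₀S
      simp only [Set.mem_setOf_eq, h0] at hv₀S
      simp [dotProduct] at hv₀S
    have hc : 0 < c := by
      have := hθ.dotProduct_mulVec_pos hv₀ne
      simpa using this
    refine ⟨c, hc, Matrix.PosSemidef.of_dotProduct_mulVec_nonneg ?_ ?_⟩
    · show (θ - c • 1)ᴴ = _
      rw [Matrix.conjTranspose_sub, hθ.1.eq, Matrix.conjTranspose_smul,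
        Matrix.conjTranspose_one]
      norm_num
    · intro v
      have hquad : dotProduct (star v) ((θ - c • 1) *ᵥ v)
          = dotProduct v (θ *ᵥ v) - c * dotProduct v v := by
        rw [Matrix.sub_mulVec]
        simp [Matrix.smul_mulVec, Matrix.one_mulVec, dotProduct_sub, dotProduct_smul]
      rw [hquad, sub_nonneg]
      by_cases hv : v = 0
      · simp [hv]
      · set q := dotProduct v v with hq
        have hqpos : 0 < q := by
          obtain ⟨i, hi⟩ := Function.ne_iff.mp hv
          exact Finset.sum_pos' (fun a _ => mul_self_nonneg _)
            ⟨i, Finset.mem_univ i, mul_self_pos.mpr hi⟩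
        set t := Real.sqrt q with htdef
        have ht : 0 < t := Real.sqrt_pos.mpr hqpos
        have ht2 : t * t = q := Real.mul_self_sqrt hqpos.le
        have hw : (t⁻¹ • v) ∈ S := by
          show dotProduct (t⁻¹ • v) (t⁻¹ • v) = 1
          rw [smul_dotProduct, dotProduct_smul, smul_eq_mul, smul_eq_mul, ← hq]
          field_simp
          nlinarith
        have hmw : c ≤ dotProduct (t⁻¹ • v) (θ *ᵥ (t⁻¹ • v)) := hmin' hw
        have hfw : dotProduct (t⁻¹ • v) (θ *ᵥ (t⁻¹ • v))
            = t⁻¹ * (t⁻¹ * dotProduct v (θ *ᵥ v)) := by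
          rw [smul_dotProduct, Matrix.mulVec_smul, dotProduct_smul, smul_eq_mul, smul_eq_mul]
        rw [hfw] at hmw
        have h3 : q * c ≤ q * (t⁻¹ * (t⁻¹ * dotProduct v (θ *ᵥ v))) :=
          mul_le_mul_of_nonneg_left hmw hqpos.le
        have h4 : q * (t⁻¹ * (t⁻¹ * dotProduct v (θ *ᵥ v))) = dotProduct v (θ *ᵥ v) := by
          rw [← ht2]
          field_simp
        linarith [h3, h4]

noncomputable def eexp (θ : Mat d) : OnePoint (KK d) → ℝ
  | OnePoint.infty => 0
  | OnePoint.some A => Real.exp (-((A.1 * θ).trace))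

@[simp] lemma eexp_infty (θ : Mat d) : eexp θ OnePoint.infty = 0 := rfl
@[simp] lemma eexp_some (θ : Mat d) (A : KK d) :
    eexp θ (OnePoint.some A) = Real.exp (-((A.1 * θ).trace)) := rfl

lemma eexp_continuous {θ : Mat d} (hθ : θ.PosDef) : Continuous (eexp θ) := by
  rw [OnePoint.continuous_iff]
  constructor
  · rw [Filter.coclosedCompact_eq_cocompact]
    show Tendsto (fun A : KK d => Real.exp (-((A.1 * θ).trace))) (cocompact _) (𝓝 0)
    rw [Metric.tendsto_nhds]
    intro ε hε
    obtain ⟨c, hc, hcoer⟩ := sw_exists_coercive hθ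
    set L : ℝ := max 0 (-Real.log ε) with hLdef
    have hL0 : 0 ≤ L := le_max_left _ _
    rw [Filter.hasBasis_cocompact.eventually_iff]
    refine ⟨Subtype.val ⁻¹' {x : Mat d | x.PosSemidef ∧ x.trace ≤ c⁻¹ * L}, ?_, ?_⟩
    · exact (Topology.IsClosedEmbedding.subtypeVal sw_isClosed_psd).isCompact_preimage
        (sw_isCompact_slice _)
    · intro A hA
      have hA2 : c⁻¹ * L < A.1.trace :=
        lt_of_not_ge fun hle => hA ⟨A.2, hle⟩
      have h1 : L < c * A.1.trace := by
        have := (mul_lt_mul_iff_right₀ hc).mpr hA2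
        rwa [← mul_assoc, mul_inv_cancel₀ hc.ne', one_mul] at this
      have h2 : L < (A.1 * θ).trace := lt_of_lt_of_le h1 (hcoer A.1 A.2)
      have h3 : -Real.log ε < (A.1 * θ).trace := lt_of_le_of_lt (le_max_right _ _) h2
      have h4 : Real.exp (-((A.1 * θ).trace)) < ε := by
        have : -((A.1 * θ).trace) < Real.log ε := by linarith
        calc Real.exp (-((A.1 * θ).trace)) < Real.exp (Real.log ε) := Real.exp_lt_exp.mpr this
        _ = ε := Real.exp_log hε
      rw [Real.dist_eq, sub_zero, abs_of_pos (Real.exp_pos _)]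
      exact h4
  · show Continuous fun A : KK d => Real.exp (-((A.1 * θ).trace))
    exact Real.continuous_exp.comp
      ((continuous_subtype_val.matrix_mul continuous_const).matrix_trace.neg)

lemma sw_traces_determine {x y : Mat d} (hx : x.PosSemidef) (hy : y.PosSemidef)
    (h : ∀ θ : Mat d, θ.PosDef → (x * θ).trace = (y * θ).trace) : x = y := by
  set z : Mat d := x - y with hzdef
  have hz : z.IsHermitian := hx.1.sub hy.1
  set S : ℝ := ∑ i, ∑ j, |z i j| with hSdef
  have hS0 : 0 ≤ S :=
    Finset.sum_nonneg fun i _ => Finset.sum_nonneg fun j _ => abs_nonneg _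
  set t : ℝ := S + 1 with htdef
  have ht : S < t := by linarith
  have hPD1 : (z + t • 1).PosDef := sw_posDef_add_smul z hz t ht
  have hPD2 : ((t : ℝ) • (1 : Mat d)).PosDef := by
    have := sw_posDef_add_smul (0 : Mat d) isHermitian_zero t (by simpa using by linarith : (∑ i : Fin d, ∑ j : Fin d, |(0 : Mat d) i j|) < t)
    simpa using this
  have h1 := h _ hPD1
  have h2 := h _ hPD2
  rw [Matrix.mul_add, Matrix.mul_add, Matrix.trace_add, Matrix.trace_add, h2] at h1
  have h3 : (x * z).trace = (y * z).trace := by linarith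
  have h4 : (z * z).trace = 0 := by
    have : ((x - y) * z).trace = 0 := by
      rw [Matrix.sub_mul, Matrix.trace_sub, h3, sub_self]
    rwa [← hzdef] at this
  have h5 : ∑ i, ∑ j, z i j * z i j = 0 := by
    have hexp : (z * z).trace = ∑ i, ∑ j, z i j * z j i := by
      simp [Matrix.trace, Matrix.diag, Matrix.mul_apply]
    have hsym : ∀ i j, z j i = z i j := by
      intro i j
      calc z j i = zᴴ i j := by simp [Matrix.conjTranspose_apply]
      _ = z i j := by rw [hz.eq]
    rw [hexp] at h4
    rw [← h4]
    exact Finset.sum_congr rfl fun i _ => Finset.sum_congr rfl fun j _ => by rw [hsym i j]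
  have h6 : z = 0 := by
    ext i j
    have := (Finset.sum_eq_zero_iff_of_nonneg
      (fun i _ => Finset.sum_nonneg fun j _ => mul_self_nonneg (z i j))).mp h5 i
      (Finset.mem_univ i)
    have := (Finset.sum_eq_zero_iff_of_nonneg
      (fun j _ => mul_self_nonneg (z i j))).mp this j (Finset.mem_univ j)
    exact mul_self_eq_zero.mp this
  have := sub_eq_zero.mp (hzdef ▸ h6)
  exact this

def SWRep (f : C(OnePoint (KK d), ℝ)) : Prop :=
  ∃ (n : ℕ) (c : Fin n → ℝ) (θ : Fin n → KK d), ∀ A : KK d,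
    f (OnePoint.some A) = ∑ i, c i * Real.exp (-((A.1 * (θ i).1).trace))

lemma rep_of_mem_adjoin {G : Set C(OnePoint (KK d), ℝ)} (hG : ∀ f ∈ G, SWRep f)
    {f : C(OnePoint (KK d), ℝ)} (hf : f ∈ Algebra.adjoin ℝ G) : SWRep f := by
  induction hf using Algebra.adjoin_induction with
  | mem f hfG => exact hG f hfG
  | algebraMap r =>
      refine ⟨1, fun _ => r, fun _ => ⟨0, Matrix.PosSemidef.zero⟩, fun A => ?_⟩
      simp [Algebra.algebraMap_eq_smul_one]
  | add f g hfmem hgmem hfr hgr =>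
      obtain ⟨n₁, c₁, θ₁, h₁⟩ := hfr
      obtain ⟨n₂, c₂, θ₂, h₂⟩ := hgr
      refine ⟨n₁ + n₂, Fin.append c₁ c₂, Fin.append θ₁ θ₂, fun A => ?_⟩
      rw [ContinuousMap.add_apply, h₁ A, h₂ A, Fin.sum_univ_add]
      simp [Fin.append_left, Fin.append_right]
  | mul f g hfmem hgmem hfr hgr =>
      obtain ⟨n₁, c₁, θ₁, h₁⟩ := hfr
      obtain ⟨n₂, c₂, θ₂, h₂⟩ := hgr
      refine ⟨n₁ * n₂,
        fun k => c₁ (finProdFinEquiv.symm k).1 * c₂ (finProdFinEquiv.symm k).2,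
        fun k => ⟨(θ₁ (finProdFinEquiv.symm k).1).1 + (θ₂ (finProdFinEquiv.symm k).2).1,
          (θ₁ _).2.add (θ₂ _).2⟩, fun A => ?_⟩
      rw [ContinuousMap.mul_apply, h₁ A, h₂ A, Finset.sum_mul_sum]
      rw [← Equiv.sum_comp finProdFinEquiv
        (fun k => (fun k => c₁ (finProdFinEquiv.symm k).1 * c₂ (finProdFinEquiv.symm k).2) k *
          Real.exp (-((A.1 * ((fun k => (θ₁ (finProdFinEquiv.symm k).1).1 +
            (θ₂ (finProdFinEquiv.symm k).2).1) k)).trace)))]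
      rw [Fintype.sum_prod_type]
      refine Finset.sum_congr rfl fun i _ => Finset.sum_congr rfl fun j _ => ?_
      simp only [Equiv.symm_apply_apply]
      rw [Matrix.mul_add, Matrix.trace_add, neg_add, Real.exp_add]
      ring

/-- Stone–Weierstrass on the one-point compactification of the cone `K_d` of `d×d`
positive semi-definite real matrices: every continuous function on `K_d ∪ {Δ}` can be
uniformly approximated by finite linear combinations of `x ↦ exp(-⟨x,θ⟩)` with
`θ ∈ K_d`, where `⟨A,B⟩ = tr(AB)`. -/
theorem stmt_15 (d : ℕ)
    (g : OnePoint {A : Matrix (Fin d) (Fin d) ℝ // A.PosSemidef} → ℝ)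
    (hg : Continuous g) :
    ∀ ε : ℝ, 0 < ε →
      ∃ (n : ℕ) (c : Fin n → ℝ)
        (θ : Fin n → {A : Matrix (Fin d) (Fin d) ℝ // A.PosSemidef}),
        ∀ A : {A : Matrix (Fin d) (Fin d) ℝ // A.PosSemidef},
          |g (OnePoint.some A) -
            ∑ i, c i * Real.exp (-((A.1 * (θ i).1).trace))| ≤ ε := by
  intro ε hε
  haveI : LocallyCompactSpace (Mat d) :=
    inferInstanceAs (LocallyCompactSpace (Fin d → Fin d → ℝ))
  haveI : LocallyCompactSpace (KK d) := IsClosed.locallyCompactSpace sw_isClosed_psd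
  set G : Set C(OnePoint (KK d), ℝ) :=
    {f | ∃ θ : Mat d, θ.PosDef ∧ ⇑f = eexp θ} with hGdef
  set Alg : Subalgebra ℝ C(OnePoint (KK d), ℝ) := Algebra.adjoin ℝ G with hAlgdef
  have hmemG : ∀ (θ : Mat d) (hθ : θ.PosDef),
      (⟨eexp θ, eexp_continuous hθ⟩ : C(OnePoint (KK d), ℝ)) ∈ Alg :=
    fun θ hθ => Algebra.subset_adjoin ⟨θ, hθ, rfl⟩
  have honePD : ((0 : Mat d) + (1:ℝ) • 1).PosDef :=
    sw_posDef_add_smul 0 isHermitian_zero 1 (by simp)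
  have hsep : Alg.SeparatesPoints := by
    intro x y hxy
    have key : ∃ θ : Mat d, θ.PosDef ∧ eexp θ x ≠ eexp θ y := by
      match x, y with
      | OnePoint.infty, OnePoint.infty => exact absurd rfl hxy
      | OnePoint.infty, OnePoint.some b =>
          refine ⟨_, honePD, ?_⟩
          rw [eexp_infty, eexp_some]
          exact fun h => (Real.exp_pos _).ne' h.symm
      | OnePoint.some a, OnePoint.infty =>
          refine ⟨_, honePD, ?_⟩
          rw [eexp_infty, eexp_some]
          exact fun h => (Real.exp_pos _).ne' h
      | OnePoint.some a, OnePoint.some b =>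
          have hab : a.1 ≠ b.1 := by
            intro h
            exact hxy (congrArg OnePoint.some (Subtype.ext h))
          have : ¬ ∀ θ : Mat d, θ.PosDef → (a.1 * θ).trace = (b.1 * θ).trace :=
            fun hall => hab (sw_traces_determine a.2 b.2 hall)
          push_neg at this
          obtain ⟨θ, hθ, hne⟩ := this
          refine ⟨θ, hθ, ?_⟩
          rw [eexp_some, eexp_some]
          intro h
          exact hne (neg_injective (Real.exp_eq_exp.mp h))
    obtain ⟨θ, hθ, hne⟩ := key
    exact ⟨eexp θ, ⟨⟨eexp θ, eexp_continuous hθ⟩, hmemG θ hθ, rfl⟩, hne⟩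
  obtain ⟨⟨f, hfAlg⟩, hnear⟩ :=
    ContinuousMap.exists_mem_subalgebra_near_continuous_of_separatesPoints Alg hsep g hg ε hε
  have hrep : SWRep f := by
    apply rep_of_mem_adjoin (G := G) ?_ hfAlg
    rintro f₀ ⟨θ, hθ, hf₀⟩
    refine ⟨1, fun _ => 1, fun _ => ⟨θ, hθ.posSemidef⟩, fun A => ?_⟩
    rw [show f₀ (OnePoint.some A) = eexp θ (OnePoint.some A) from congrFun hf₀ _, eexp_some]
    simp
  obtain ⟨n, c, θ, hrepf⟩ := hrep
  refine ⟨n, c, θ, fun A => ?_⟩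
  rw [← hrepf A]
  have := hnear (OnePoint.some A)
  rw [Real.norm_eq_abs] at this
  rw [abs_sub_comm]
  exact le_of_lt this
end

section
/- Let X₁ be a nonnegative random variable with P(X₁ > x) ~ c x^{-α} as x → ∞ for some c, α > 0, let X₂ be an independent nonnegative random variable with E[X₂^α] < ∞. Then P(X₁X₂ > x) ~ E[X₂^α] · P(X₁ > x) as x → ∞. -/
open MeasureTheory ProbabilityTheory Filter Topology

/-- Breiman-type lemma: if `X₁` is nonnegative with `P(X₁ > x) ~ c x^{-α}` and `X₂` is
an independent nonnegative variable with `E[X₂^α] < ∞`, then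
`P(X₁X₂ > x) ~ E[X₂^α] · P(X₁ > x)` as `x → ∞`. -/
theorem stmt_17 {Ω : Type*} [MeasurableSpace Ω] (P : Measure Ω) [IsProbabilityMeasure P]
    (X₁ X₂ : Ω → ℝ) (hm1 : Measurable X₁) (hm2 : Measurable X₂)
    (h1 : ∀ ω, 0 ≤ X₁ ω) (h2 : ∀ ω, 0 ≤ X₂ ω)
    (hindep : IndepFun X₁ X₂ P)
    (c α : ℝ) (hc : 0 < c) (hα : 0 < α)
    (htail : Tendsto (fun x : ℝ => (P {ω | x < X₁ ω}).toReal / (c * x ^ (-α)))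
      atTop (𝓝 1))
    (hmom : Integrable (fun ω => X₂ ω ^ α) P) :
    Tendsto (fun x : ℝ =>
        (P {ω | x < X₁ ω * X₂ ω}).toReal / (P {ω | x < X₁ ω}).toReal)
      atTop (𝓝 (∫ ω, X₂ ω ^ α ∂P)) := by
  classical
  set μ₁ := P.map X₁ with hμ₁def
  set μ₂ := P.map X₂ with hμ₂def
  have hPμ₁ : IsProbabilityMeasure μ₁ := Measure.isProbabilityMeasure_map hm1.aemeasurable
  have hPμ₂ : IsProbabilityMeasure μ₂ := Measure.isProbabilityMeasure_map hm2.aemeasurable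
  have hrpow_meas : Measurable fun y : ℝ => y ^ α :=
    (Real.continuous_rpow_const hα.le).measurable
  -- the tail function
  set G : ℝ → ℝ := fun t => (P {ω | t < X₁ ω}).toReal with hGdef
  have hGμ : ∀ t, P {ω | t < X₁ ω} = μ₁ (Set.Ioi t) := by
    intro t
    rw [hμ₁def, Measure.map_apply hm1 measurableSet_Ioi]
    rfl
  have hGanti : Antitone G := by
    intro s t hst
    refine ENNReal.toReal_mono (measure_ne_top _ _) ?_
    exact measure_mono fun ω hω => lt_of_le_of_lt hst hω
  have hGmeas : Measurable G := hGanti.measurable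
  have hGnonneg : ∀ t, 0 ≤ G t := fun t => ENNReal.toReal_nonneg
  have hGle1 : ∀ t, G t ≤ 1 := by
    intro t
    have h := ENNReal.toReal_mono ENNReal.one_ne_top (prob_le_one (μ := P) (s := {ω | t < X₁ ω}))
    simpa using h
  -- the denominator
  have hDpos : ∀ x : ℝ, 0 < x → 0 < c * x ^ (-α) := fun x hx =>
    mul_pos hc (Real.rpow_pos_of_pos hx _)
  -- a.e. nonnegativity of μ₂
  have hμ₂ae : ∀ᵐ y ∂μ₂, 0 ≤ y := by
    rw [hμ₂def, ae_map_iff hm2.aemeasurable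
      (measurableSet_le measurable_const measurable_id : MeasurableSet {y : ℝ | 0 ≤ y})]
    exact ae_of_all _ h2
  -- Step A/B : representation of the product tail as an integral
  have hrep : ∀ x : ℝ, 0 < x →
      P {ω | x < X₁ ω * X₂ ω}
        = ∫⁻ y, (if 0 < y then μ₁ (Set.Ioi (x / y)) else 0) ∂μ₂ := by
    intro x hx
    have hmap : P.map (fun ω => (X₂ ω, X₁ ω)) = μ₂.prod μ₁ :=
      (indepFun_iff_map_prod_eq_prod_map_map hm2.aemeasurable hm1.aemeasurable).mp hindep.symm
    have hset : MeasurableSet {p : ℝ × ℝ | x < p.2 * p.1} :=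
      measurableSet_lt measurable_const (measurable_snd.mul measurable_fst)
    have h0 : P {ω | x < X₁ ω * X₂ ω}
        = (P.map (fun ω => (X₂ ω, X₁ ω))) {p : ℝ × ℝ | x < p.2 * p.1} := by
      rw [Measure.map_apply (hm2.prodMk hm1) hset]
      rfl
    rw [h0, hmap, Measure.prod_apply hset]
    refine lintegral_congr_ae (hμ₂ae.mono fun y hy => ?_)
    show μ₁ (Prod.mk y ⁻¹' {p : ℝ × ℝ | x < p.2 * p.1})
        = if 0 < y then μ₁ (Set.Ioi (x / y)) else 0
    rcases eq_or_lt_of_le hy with hy0 | hy0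
    · rw [if_neg (by simp [← hy0])]
      have he : (Prod.mk y ⁻¹' {p : ℝ × ℝ | x < p.2 * p.1}) = (∅ : Set ℝ) := by
        ext a
        simp [← hy0, not_lt.mpr hx.le]
      simp [he]
    · have he : (Prod.mk y ⁻¹' {p : ℝ × ℝ | x < p.2 * p.1}) = Set.Ioi (x / y) := by
        ext a
        simp only [Set.mem_preimage, Set.mem_setOf_eq, Set.mem_Ioi]
        rw [div_lt_iff₀ hy0]
      rw [he, if_pos hy0]
  -- Step C : real-valued representation
  set H : ℝ → ℝ → ℝ := fun x y => if 0 < y then G (x / y) else 0 with hHdef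
  have hHmeas : ∀ x, Measurable (H x) := fun x =>
    Measurable.ite (measurableSet_lt measurable_const measurable_id)
      (hGmeas.comp (measurable_const.div measurable_id)) measurable_const
  have hHnonneg : ∀ x y, 0 ≤ H x y := by
    intro x y
    simp only [hHdef]
    split
    · exact hGnonneg _
    · exact le_refl 0
  have hμ₁Ioi_anti : Antitone fun t : ℝ => μ₁ (Set.Ioi t) := fun s t hst =>
    measure_mono (Set.Ioi_subset_Ioi hst)
  have hfx : ∀ x : ℝ, 0 < x →
      (P {ω | x < X₁ ω * X₂ ω}).toReal = ∫ y, H x y ∂μ₂ := by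
    intro x hx
    rw [hrep x hx, ← integral_toReal]
    · refine integral_congr_ae (ae_of_all _ fun y => ?_)
      simp only [hHdef]
      split_ifs with h
      · simp only [hGdef]
        rw [hGμ]
      · simp
    · exact (Measurable.ite (measurableSet_lt measurable_const measurable_id)
        (hμ₁Ioi_anti.measurable.comp (measurable_const.div measurable_id))
        measurable_const).aemeasurable
    · refine ae_of_all _ fun y => ?_
      split
      · exact lt_of_le_of_lt prob_le_one ENNReal.one_lt_top
      · exact ENNReal.zero_lt_top
  -- the tail bound : choose T ≥ 1 with G t < 2 c t^{-α} for t ≥ T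
  obtain ⟨T₀, hT₀⟩ := eventually_atTop.mp (htail.eventually_lt_const one_lt_two)
  set T := max T₀ 1 with hTdef
  have hT1 : (1 : ℝ) ≤ T := le_max_right _ _
  have hTpos : (0 : ℝ) < T := lt_of_lt_of_le one_pos hT1
  have hTbound : ∀ t : ℝ, T ≤ t → G t ≤ 2 * (c * t ^ (-α)) := by
    intro t ht
    have h1t : (0 : ℝ) < t := lt_of_lt_of_le hTpos ht
    have := hT₀ t (le_trans (le_max_left _ _) ht)
    have hd := hDpos t h1t
    calc G t = G t / (c * t ^ (-α)) * (c * t ^ (-α)) := by field_simp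
    _ ≤ 2 * (c * t ^ (-α)) := by
        exact mul_le_mul_of_nonneg_right this.le hd.le
  -- the constant in the domination
  set C : ℝ := 2 + T ^ α / c with hCdef
  have hCnonneg : 0 ≤ C := by positivity
  -- the integrand after normalisation
  set F : ℝ → ℝ → ℝ := fun x y => H x y / (c * x ^ (-α)) with hFdef
  -- integrability of the dominating function
  have hint : Integrable (fun y : ℝ => y ^ α) μ₂ := by
    rw [hμ₂def, integrable_map_measure hrpow_meas.aestronglyMeasurable hm2.aemeasurable]
    exact hmom
  have hboundint : Integrable (fun y : ℝ => C * y ^ α) μ₂ := hint.const_mul C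
  -- pointwise convergence
  have hlim : ∀ᵐ y ∂μ₂, Tendsto (fun x => F x y) atTop (𝓝 (y ^ α)) := by
    refine hμ₂ae.mono fun y hy => ?_
    rcases eq_or_lt_of_le hy with hy0 | hy0
    · have h0 : ∀ x : ℝ, F x y = 0 := fun x => by simp [hFdef, hHdef, ← hy0]
      simp only [h0]
      rw [← hy0, Real.zero_rpow hα.ne']
      exact tendsto_const_nhds
    · have hyα : (0 : ℝ) < y ^ α := Real.rpow_pos_of_pos hy0 _
      have hcomp : Tendsto (fun x : ℝ => x / y) atTop atTop :=
        Tendsto.atTop_div_const hy0 tendsto_id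
      have h1 : Tendsto (fun x : ℝ => G (x / y) / (c * (x / y) ^ (-α)) * y ^ α)
          atTop (𝓝 (1 * y ^ α)) :=
        (htail.comp hcomp).mul_const _
      rw [one_mul] at h1
      refine h1.congr' ?_
      filter_upwards [eventually_gt_atTop 0] with x hx
      have hxy : (0 : ℝ) < x / y := div_pos hx hy0
      have hpow : (x / y) ^ (-α) = x ^ (-α) * y ^ α := by
        rw [Real.div_rpow hx.le hy0.le, Real.rpow_neg hy0.le, div_inv_eq_mul]
      have hxne : x ^ (-α) ≠ 0 := (Real.rpow_pos_of_pos hx _).ne'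
      have hyne : y ^ α ≠ 0 := hyα.ne'
      simp only [hFdef, hHdef, if_pos hy0, hpow]
      field_simp
  -- a.e. measurability of the integrands
  have hFmeas : ∀ x : ℝ, AEStronglyMeasurable (F x) μ₂ := by
    intro x
    exact ((hHmeas x).div_const _).aestronglyMeasurable
  -- the domination
  have hbound : ∀ᶠ x in atTop, ∀ᵐ y ∂μ₂, ‖F x y‖ ≤ C * y ^ α := by
    filter_upwards [eventually_ge_atTop T] with x hxT
    have hx : (0 : ℝ) < x := lt_of_lt_of_le hTpos hxT
    have hd := hDpos x hx
    refine hμ₂ae.mono fun y hy => ?_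
    rcases eq_or_lt_of_le hy with hy0 | hy0
    · have h0 : F x y = 0 := by simp [hFdef, hHdef, ← hy0]
      rw [h0, ← hy0, Real.zero_rpow hα.ne', mul_zero, norm_zero]
    · have hyα : (0 : ℝ) < y ^ α := Real.rpow_pos_of_pos hy0 _
      have hFval : F x y = G (x / y) / (c * x ^ (-α)) := by
        simp [hFdef, hHdef, if_pos hy0]
      have hFnn : 0 ≤ F x y := by
        rw [hFval]
        exact div_nonneg (hGnonneg _) hd.le
      rw [Real.norm_of_nonneg hFnn, hFval]
      rcases le_or_gt T (x / y) with hcase | hcase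
      · -- tail regime
        have hG := hTbound _ hcase
        have hpow : (x / y) ^ (-α) = x ^ (-α) * y ^ α := by
          rw [Real.div_rpow hx.le hy0.le, Real.rpow_neg hy0.le, div_inv_eq_mul]
        rw [hpow] at hG
        have : G (x / y) / (c * x ^ (-α)) ≤ 2 * y ^ α := by
          rw [div_le_iff₀ hd]
          calc G (x / y) ≤ 2 * (c * (x ^ (-α) * y ^ α)) := hG
          _ = 2 * y ^ α * (c * x ^ (-α)) := by ring
        refine this.trans ?_
        have h0 : (0:ℝ) ≤ T ^ α / c * y ^ α := by positivity
        simp only [hCdef]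
        nlinarith [h0]
      · -- small regime : x / y < T, so x < T * y
        have hxTy : x < T * y := by
          rw [div_lt_iff₀ hy0] at hcase
          linarith [hcase]
        have hxα : x ^ α ≤ T ^ α * y ^ α := by
          calc x ^ α ≤ (T * y) ^ α := Real.rpow_le_rpow hx.le hxTy.le hα.le
          _ = T ^ α * y ^ α := Real.mul_rpow hTpos.le hy0.le
        have hinv : x ^ (-α) = (x ^ α)⁻¹ := Real.rpow_neg hx.le _
        have hxαpos : (0:ℝ) < x ^ α := Real.rpow_pos_of_pos hx _
        have : G (x / y) / (c * x ^ (-α)) ≤ T ^ α / c * y ^ α := by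
          rw [hinv]
          rw [div_le_iff₀ (by positivity)]
          have h1' : G (x / y) ≤ 1 := hGle1 _
          have : T ^ α / c * y ^ α * (c * (x ^ α)⁻¹) = (T ^ α * y ^ α) / x ^ α := by
            field_simp
          rw [this]
          refine h1'.trans ?_
          rw [le_div_iff₀ hxαpos, one_mul]
          exact hxα
        refine this.trans ?_
        have h2y : (0:ℝ) ≤ 2 * y ^ α := by positivity
        simp only [hCdef]
        nlinarith [h2y]
  -- dominated convergence
  have hDCT : Tendsto (fun x => ∫ y, F x y ∂μ₂) atTop (𝓝 (∫ y, y ^ α ∂μ₂)) :=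
    tendsto_integral_filter_of_dominated_convergence _ (Eventually.of_forall hFmeas)
      hbound hboundint hlim
  -- identify the limit integral
  have hIeq : ∫ y, y ^ α ∂μ₂ = ∫ ω, X₂ ω ^ α ∂P := by
    rw [hμ₂def, integral_map hm2.aemeasurable hrpow_meas.aestronglyMeasurable]
  -- the normalised product tail converges
  have hfD : Tendsto (fun x : ℝ => (P {ω | x < X₁ ω * X₂ ω}).toReal / (c * x ^ (-α)))
      atTop (𝓝 (∫ ω, X₂ ω ^ α ∂P)) := by
    rw [← hIeq]
    refine hDCT.congr' ?_
    filter_upwards [eventually_gt_atTop 0] with x hx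
    rw [hfx x hx]
    simp only [hFdef]
    rw [integral_div]
  -- the denominator ratio converges to 1
  have hginv : Tendsto (fun x : ℝ => ((P {ω | x < X₁ ω}).toReal / (c * x ^ (-α)))⁻¹)
      atTop (𝓝 1) := by
    have := htail.inv₀ one_ne_zero
    simpa using this
  have hmul := hfD.mul hginv
  rw [mul_one] at hmul
  refine hmul.congr' ?_
  filter_upwards [eventually_gt_atTop 0] with x hx
  have hd := (hDpos x hx).ne'
  set a := (P {ω | x < X₁ ω * X₂ ω}).toReal
  set b := (P {ω | x < X₁ ω}).toReal
  set d := c * x ^ (-α)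
  show a / d * (b / d)⁻¹ = a / b
  rw [inv_div, div_mul_div_comm, mul_comm a d, mul_div_mul_left a b hd]
end

section
/- Let X₁, X₂, ... be iid standard normal and (ξ_i)_{i≥1} be the points of a Poisson point process on (0,∞) with mean measure ρ_stable(dz; α, c) = α c^α z^{-α-1} dz, independent of the X_i, with α ∈ (0,1), c > 0. Then Σ_{i≥1} ξ_i max(0, X_i)² has the same distribution as 2(Γ(1/2+α)/(2√π))^{1/α} · Σ_{i≥1} ξ_i. -/
open MeasureTheory ProbabilityTheory Filter
open Real Set
open scoped ENNReal NNReal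

lemma scale_lintegral {f : ℝ → ℝ≥0∞} (hf : Measurable f) {a : ℝ} (ha : 0 < a) :
    ∫⁻ z in Ioi (0:ℝ), f (a * z) = ENNReal.ofReal a⁻¹ * ∫⁻ z in Ioi (0:ℝ), f z := by
  have hm : Measurable fun z : ℝ => a * z := measurable_const_mul a
  have hpre : (fun z : ℝ => a * z) ⁻¹' (Ioi 0) = Ioi 0 := by
    ext z
    simp only [Set.mem_preimage, Set.mem_Ioi]
    constructor
    · intro h; nlinarith
    · intro h; positivity
  have h1 : Measure.map (fun z : ℝ => a * z) (volume.restrict ((fun z : ℝ => a * z) ⁻¹' (Ioi 0)))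
      = (ENNReal.ofReal |a⁻¹| • volume).restrict (Ioi 0) := by
    rw [← Measure.restrict_map hm measurableSet_Ioi, Real.map_volume_mul_left (ne_of_gt ha)]
  rw [hpre] at h1
  rw [← lintegral_map hf hm, h1, Measure.restrict_smul, lintegral_smul_measure,
    abs_of_pos (inv_pos.mpr ha), smul_eq_mul]

lemma stableK {α c : ℝ} (hα0 : 0 < α) (hα1 : α < 1) (hc : 0 < c) {lam : ℝ} (hlam : 0 ≤ lam) :
    ∫⁻ z in Ioi (0:ℝ),
        ENNReal.ofReal (1 - Real.exp (-(lam * z))) * ENNReal.ofReal (α * c ^ α * z ^ (-α - 1))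
      = ENNReal.ofReal (lam ^ α) *
        ∫⁻ z in Ioi (0:ℝ),
          ENNReal.ofReal (1 - Real.exp (-z)) * ENNReal.ofReal (α * c ^ α * z ^ (-α - 1)) := by
  rcases eq_or_lt_of_le hlam with h0 | hlam
  · rw [← h0]
    simp [Real.zero_rpow (ne_of_gt hα0)]
  · set F : ℝ → ℝ≥0∞ := fun z =>
      ENNReal.ofReal (1 - Real.exp (-z)) * ENNReal.ofReal (α * c ^ α * z ^ (-α - 1)) with hF
    have hFmeas : Measurable F := by
      apply Measurable.fun_mul
      · exact (measurable_const.sub (measurable_id.neg.exp)).ennreal_ofReal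
      · fun_prop
    have key : ∀ z ∈ Ioi (0:ℝ),
        ENNReal.ofReal (1 - Real.exp (-(lam * z))) * ENNReal.ofReal (α * c ^ α * z ^ (-α - 1))
          = F (lam * z) * ENNReal.ofReal (lam ^ (α + 1)) := by
      intro z hz
      have hz0 : (0:ℝ) < z := hz
      have hB : ENNReal.ofReal (α * c ^ α * (lam * z) ^ (-α - 1)) *
          ENNReal.ofReal (lam ^ (α + 1))
          = ENNReal.ofReal (α * c ^ α * z ^ (-α - 1)) := by
        rw [← ENNReal.ofReal_mul (mul_nonneg (mul_nonneg hα0.le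
          (Real.rpow_nonneg hc.le _)) (Real.rpow_nonneg (by positivity) _))]
        congr 1
        rw [Real.mul_rpow hlam.le hz0.le,
          show α * c ^ α * (lam ^ (-α - 1) * z ^ (-α - 1)) * lam ^ (α + 1)
            = α * c ^ α * z ^ (-α - 1) * (lam ^ (-α - 1) * lam ^ (α + 1)) by ring,
          ← Real.rpow_add hlam]
        norm_num
      calc ENNReal.ofReal (1 - Real.exp (-(lam * z))) *
            ENNReal.ofReal (α * c ^ α * z ^ (-α - 1))
          = ENNReal.ofReal (1 - Real.exp (-(lam * z))) *
            (ENNReal.ofReal (α * c ^ α * (lam * z) ^ (-α - 1)) *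
              ENNReal.ofReal (lam ^ (α + 1))) := by rw [hB]
        _ = F (lam * z) * ENNReal.ofReal (lam ^ (α + 1)) := by rw [hF]; ring
    rw [setLIntegral_congr_fun measurableSet_Ioi key,
      lintegral_mul_const' _ _ ENNReal.ofReal_ne_top,
      scale_lintegral hFmeas hlam,
      mul_comm (ENNReal.ofReal lam⁻¹) _, mul_assoc]
    have hpow : ENNReal.ofReal lam⁻¹ * ENNReal.ofReal (lam ^ (α + 1))
        = ENNReal.ofReal (lam ^ α) := by
      rw [← ENNReal.ofReal_mul (inv_nonneg.mpr hlam.le)]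
      congr 1
      rw [show lam⁻¹ = lam ^ (-1 : ℝ) from (Real.rpow_neg_one lam).symm,
        ← Real.rpow_add hlam]
      norm_num
    rw [hpow, mul_comm]

lemma gaussMoment {α : ℝ} (hα0 : 0 < α) :
    ∫⁻ x, ENNReal.ofReal (max 0 x ^ (2 * α)) ∂(gaussianReal 0 1)
      = ENNReal.ofReal (2 ^ α * Real.Gamma (α + 1 / 2) / (2 * Real.sqrt π)) := by
  have hmeas : Measurable fun x : ℝ => ENNReal.ofReal (max 0 x ^ (2 * α)) := by fun_prop
  rw [gaussianReal_of_var_ne_zero 0 one_ne_zero,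
    lintegral_withDensity_eq_lintegral_mul _ (measurable_gaussianPDF 0 1) hmeas,
    ← lintegral_add_compl _ (measurableSet_Ioi (a := (0:ℝ)))]
  have hc0 : ∫⁻ x in (Ioi (0:ℝ))ᶜ,
      (gaussianPDF 0 1 * fun x : ℝ => ENNReal.ofReal (max 0 x ^ (2 * α))) x = 0 := by
    have hz : ∀ x ∈ (Ioi (0:ℝ))ᶜ,
        (gaussianPDF 0 1 * fun x : ℝ => ENNReal.ofReal (max 0 x ^ (2 * α))) x
          = (fun _ => (0:ℝ≥0∞)) x := by
      intro x hx
      simp only [Set.mem_compl_iff, Set.mem_Ioi, not_lt] at hx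
      simp [max_eq_left hx, Real.zero_rpow (by positivity : 2 * α ≠ 0)]
    rw [setLIntegral_congr_fun measurableSet_Ioi.compl hz,
      lintegral_zero]
  rw [hc0, add_zero]
  have hkey : ∫⁻ x in Ioi (0:ℝ),
      (gaussianPDF 0 1 * fun x : ℝ => ENNReal.ofReal (max 0 x ^ (2 * α))) x
      = ∫⁻ x in Ioi (0:ℝ),
        ENNReal.ofReal ((Real.sqrt (2 * π))⁻¹ * (x ^ (2 * α) * Real.exp (-(1/2) * x ^ 2))) := by
    apply setLIntegral_congr_fun measurableSet_Ioi
    intro x hx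
    have hx0 : (0:ℝ) < x := hx
    simp only [Pi.mul_apply, gaussianPDF, gaussianPDFReal, NNReal.coe_one, mul_one, sub_zero,
      max_eq_right hx0.le]
    rw [← ENNReal.ofReal_mul (by positivity)]
    congr 1
    rw [show (-(1/2) * x ^ 2 : ℝ) = -x ^ 2 / 2 by ring]
    ring
  rw [hkey]
  rw [← ofReal_integral_eq_lintegral_ofReal]
  · congr 1
    rw [MeasureTheory.integral_const_mul]
    have h1 : ∫ x in Ioi (0:ℝ), x ^ (2 * α) * Real.exp (-(1/2) * x ^ 2)
        = (1/2 : ℝ) ^ (-(2 * α + 1) / 2) * (1 / 2) * Real.Gamma ((2 * α + 1) / 2) := by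
      rw [← integral_rpow_mul_exp_neg_mul_rpow (by norm_num : (0:ℝ) < 2)
        (by nlinarith : (-1:ℝ) < 2 * α) (by norm_num : (0:ℝ) < 1/2)]
      apply setIntegral_congr_fun measurableSet_Ioi
      intro x hx
      have hx0 : (0:ℝ) < x := hx
      simp only [Real.rpow_two]
    rw [h1]
    have hs2 : Real.sqrt (2 * π) = Real.sqrt 2 * Real.sqrt π :=
      Real.sqrt_mul (by norm_num) π
    have hhalf : (1/2 : ℝ) ^ (-(2 * α + 1) / 2) = 2 ^ α * Real.sqrt 2 := by
      rw [show (1/2 : ℝ) = 2⁻¹ by norm_num, Real.inv_rpow (by norm_num : (0:ℝ) ≤ 2),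
        ← Real.rpow_neg (by norm_num : (0:ℝ) ≤ 2),
        show -(-(2 * α + 1) / 2) = α + 1/2 by ring,
        Real.rpow_add (by norm_num : (0:ℝ) < 2), Real.sqrt_eq_rpow]
    rw [hhalf, hs2, show (2 * α + 1) / 2 = α + 1/2 by ring]
    have hsπ : (0:ℝ) < Real.sqrt π := Real.sqrt_pos.mpr Real.pi_pos
    have hs2' : (0:ℝ) < Real.sqrt 2 := Real.sqrt_pos.mpr (by norm_num)
    field_simp
  · refine (Integrable.const_mul ?_ _)
    exact integrableOn_rpow_mul_exp_neg_mul_sq (by norm_num) (by nlinarith)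
  · filter_upwards [ae_restrict_mem measurableSet_Ioi] with x hx
    have hx0 : (0:ℝ) < x := hx
    have : (0:ℝ) ≤ x ^ (2 * α) := Real.rpow_nonneg hx0.le _
    positivity

lemma poly_approx (g : C(ℝ, ℝ)) {ε : ℝ} (hε : 0 < ε) :
    ∃ p : Polynomial ℝ, ∀ x ∈ Set.Icc (0:ℝ) 1, |g x - p.eval x| ≤ ε := by
  have htop := polynomialFunctions_closure_eq_top 0 1
  have hmem : (g.restrict (Set.Icc (0:ℝ) 1)) ∈
      (polynomialFunctions (Set.Icc (0:ℝ) 1)).topologicalClosure := by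
    rw [htop]; trivial
  have hmem' : (g.restrict (Set.Icc (0:ℝ) 1)) ∈
      closure ((polynomialFunctions (Set.Icc (0:ℝ) 1)) : Set C(Set.Icc (0:ℝ) 1, ℝ)) := hmem
  rw [Metric.mem_closure_iff] at hmem'
  obtain ⟨q, hq_mem, hq_dist⟩ := hmem' ε hε
  rw [polynomialFunctions_coe] at hq_mem
  obtain ⟨p, hp⟩ := hq_mem
  refine ⟨p, fun x hx => ?_⟩
  have h1 : dist (g.restrict (Set.Icc (0:ℝ) 1) ⟨x, hx⟩) (q ⟨x, hx⟩)
      ≤ dist (g.restrict (Set.Icc (0:ℝ) 1)) q := ContinuousMap.dist_apply_le_dist _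
  rw [← hp] at h1 hq_dist
  have h2 : (Polynomial.toContinuousMapOnAlgHom (Set.Icc (0:ℝ) 1) p) ⟨x, hx⟩
      = p.eval x := rfl
  have h3 : (g.restrict (Set.Icc (0:ℝ) 1)) ⟨x, hx⟩ = g x := rfl
  rw [h2, h3, Real.dist_eq] at h1
  exact h1.trans hq_dist.le

lemma integrable_of_bounded_on {μ : Measure ℝ} [IsFiniteMeasure μ]
    (hae : ∀ᵐ x ∂μ, x ∈ Set.Icc (0:ℝ) 1) {f : ℝ → ℝ} (hf : AEStronglyMeasurable f μ)
    {C : ℝ} (hC : ∀ x ∈ Set.Icc (0:ℝ) 1, ‖f x‖ ≤ C) : Integrable f μ :=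
  Integrable.mono' (integrable_const C) hf (hae.mono fun x hx => hC x hx)

lemma moment_ext {μ ν : Measure ℝ} [IsProbabilityMeasure μ] [IsProbabilityMeasure ν]
    (hμ : μ (Set.Icc 0 1)ᶜ = 0) (hν : ν (Set.Icc 0 1)ᶜ = 0)
    (h : ∀ n : ℕ, ∫ x, x ^ n ∂μ = ∫ x, x ^ n ∂ν) : μ = ν := by
  have hae_μ : ∀ᵐ x ∂μ, x ∈ Set.Icc (0:ℝ) 1 := by
    rw [ae_iff]; exact hμ
  have hae_ν : ∀ᵐ x ∂ν, x ∈ Set.Icc (0:ℝ) 1 := by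
    rw [ae_iff]; exact hν
  -- monomials are integrable
  have hmono : ∀ (κ : Measure ℝ), IsProbabilityMeasure κ → (∀ᵐ x ∂κ, x ∈ Set.Icc (0:ℝ) 1) →
      ∀ i : ℕ, Integrable (fun x : ℝ => x ^ i) κ := by
    intro κ _ hae i
    refine integrable_of_bounded_on hae ((measurable_id.pow_const i).aestronglyMeasurable)
      (C := 1) ?_
    intro x hx
    rw [Real.norm_eq_abs, abs_pow]
    exact pow_le_one₀ (abs_nonneg x) (abs_le.mpr ⟨by linarith [hx.1], hx.2⟩)
  -- polynomials integrate equally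
  have hpoly : ∀ p : Polynomial ℝ, ∫ x, p.eval x ∂μ = ∫ x, p.eval x ∂ν := by
    intro p
    simp_rw [Polynomial.eval_eq_sum_range]
    rw [integral_finset_sum _ (fun i _ => (hmono μ ‹_› hae_μ i).const_mul _),
      integral_finset_sum _ (fun i _ => (hmono ν ‹_› hae_ν i).const_mul _)]
    refine Finset.sum_congr rfl fun i _ => ?_
    rw [MeasureTheory.integral_const_mul, MeasureTheory.integral_const_mul, h i]
  -- polynomial integrability
  have hpint : ∀ (κ : Measure ℝ), IsProbabilityMeasure κ → (∀ᵐ x ∂κ, x ∈ Set.Icc (0:ℝ) 1) →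
      ∀ p : Polynomial ℝ, Integrable (fun x => p.eval x) κ := by
    intro κ _ hae p
    obtain ⟨C, hC⟩ := isCompact_Icc.exists_bound_of_continuousOn
      (p.continuous_aeval.continuousOn (s := Set.Icc (0:ℝ) 1))
    exact integrable_of_bounded_on hae (p.continuous_aeval.measurable.aestronglyMeasurable)
      (C := C) (by simpa using hC)
  -- continuous functions integrate equally
  have hcont : ∀ g : C(ℝ, ℝ), ∫ x, g x ∂μ = ∫ x, g x ∂ν := by
    intro g
    obtain ⟨Cg, hCg⟩ := isCompact_Icc.exists_bound_of_continuousOn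
      (g.continuous.continuousOn (s := Set.Icc (0:ℝ) 1))
    have hgμ : Integrable (fun x => g x) μ :=
      integrable_of_bounded_on hae_μ g.continuous.measurable.aestronglyMeasurable hCg
    have hgν : Integrable (fun x => g x) ν :=
      integrable_of_bounded_on hae_ν g.continuous.measurable.aestronglyMeasurable hCg
    have key : ∀ ε : ℝ, 0 < ε → |(∫ x, g x ∂μ) - ∫ x, g x ∂ν| ≤ 2 * ε := by
      intro ε hε
      obtain ⟨p, hp⟩ := poly_approx g hε
      have hpμ := hpint μ ‹_› hae_μ p
      have hpν := hpint ν ‹_› hae_ν p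
      have hdiff : ∀ (κ : Measure ℝ), IsProbabilityMeasure κ →
          (∀ᵐ x ∂κ, x ∈ Set.Icc (0:ℝ) 1) → Integrable (fun x => g x) κ →
          Integrable (fun x => p.eval x) κ →
          |(∫ x, g x ∂κ) - ∫ x, p.eval x ∂κ| ≤ ε := by
        intro κ hκ hae hg' hp'
        rw [← integral_sub hg' hp']
        calc |∫ x, (g x - p.eval x) ∂κ| ≤ ∫ x, |g x - p.eval x| ∂κ := by
              simpa [Real.norm_eq_abs] using
                norm_integral_le_integral_norm (μ := κ) (fun x => g x - p.eval x)
          _ ≤ ∫ _x, ε ∂κ := by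
              apply integral_mono_ae (hg'.sub hp').abs (integrable_const ε)
              exact hae.mono fun x hx => hp x hx
          _ = ε := by simp
      calc |(∫ x, g x ∂μ) - ∫ x, g x ∂ν|
          ≤ |(∫ x, g x ∂μ) - ∫ x, p.eval x ∂μ| +
            |(∫ x, p.eval x ∂μ) - ∫ x, g x ∂ν| := abs_sub_le _ _ _
        _ = |(∫ x, g x ∂μ) - ∫ x, p.eval x ∂μ| +
            |(∫ x, p.eval x ∂ν) - ∫ x, g x ∂ν| := by rw [hpoly p]
        _ ≤ ε + ε := by
            refine add_le_add (hdiff μ ‹_› hae_μ hgμ hpμ) ?_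
            rw [abs_sub_comm]
            exact hdiff ν ‹_› hae_ν hgν hpν
        _ = 2 * ε := by ring
    have habs : |(∫ x, g x ∂μ) - ∫ x, g x ∂ν| ≤ 0 := by
      refine le_of_forall_pos_le_add fun ε hε => ?_
      have := key (ε / 2) (half_pos hε)
      linarith
    have := abs_nonpos_iff.mp habs
    linarith [sub_eq_zero.mp this]
  -- conclude via bounded continuous functions
  apply ext_of_forall_lintegral_eq_of_IsFiniteMeasure
  intro f
  have hintμ : Integrable (fun x => (f x : ℝ)) μ :=
    BoundedContinuousFunction.integrable_of_nnreal (μ := μ) f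
  have hintν : Integrable (fun x => (f x : ℝ)) ν :=
    BoundedContinuousFunction.integrable_of_nnreal (μ := ν) f
  rw [lintegral_coe_eq_integral _ hintμ, lintegral_coe_eq_integral _ hintν]
  congr 1
  exact hcont ⟨fun x => (f x : ℝ), NNReal.continuous_coe.comp f.continuous⟩

/-- Let `(ξ_i)` enumerate the points of a Poisson point process on `(0,∞)` with mean
measure `ρ_stable(dz; α, c) = α c^α z^{-α-1} dz` and let `(X_i)` be iid standard normal
marks, independent of the process; this is encoded by the Laplace functional of the
marked point process. Then `∑ᵢ ξᵢ max(0,Xᵢ)²` has the same distribution as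
`2 (Γ(1/2+α)/(2√π))^{1/α} ∑ᵢ ξᵢ`. -/
theorem stmt_19 {Ω : Type*} [MeasurableSpace Ω] (P : Measure Ω) [IsProbabilityMeasure P]
    (α c : ℝ) (hα : α ∈ Set.Ioo (0 : ℝ) 1) (hc : 0 < c)
    (ξ X : ℕ → Ω → ℝ)
    (hξm : ∀ i, Measurable (ξ i)) (hXm : ∀ i, Measurable (X i))
    (hξpos : ∀ i ω, 0 < ξ i ω)
    (hLaplace : ∀ g : ℝ → ℝ → ℝ, Measurable (Function.uncurry g) →
      (∀ z x, 0 ≤ g z x) →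
      ∫ ω, Real.exp (-(∑' i, g (ξ i ω) (X i ω))) ∂P =
        Real.exp (-(∫ z in Set.Ioi (0 : ℝ),
          (∫ x, (1 - Real.exp (-(g z x))) ∂(gaussianReal 0 1)) *
            (α * c ^ α * z ^ (-α - 1))))) :
    IdentDistrib (fun ω => ∑' i, ξ i ω * max 0 (X i ω) ^ 2)
      (fun ω => 2 * (Real.Gamma (1 / 2 + α) / (2 * Real.sqrt Real.pi)) ^ (1 / α) *
        ∑' i, ξ i ω) P P := by
  obtain ⟨hα0, hα1⟩ := hα
  set κ : ℝ := 2 * (Real.Gamma (1 / 2 + α) / (2 * Real.sqrt Real.pi)) ^ (1 / α) with hκdef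
  have hB : (0:ℝ) < Real.Gamma (1 / 2 + α) / (2 * Real.sqrt Real.pi) := by
    apply div_pos (Real.Gamma_pos_of_pos (by linarith))
    have := Real.sqrt_pos.mpr Real.pi_pos
    linarith
  have hκ : 0 < κ := by
    rw [hκdef]
    have := Real.rpow_pos_of_pos hB (1 / α)
    linarith
  have hκα : κ ^ α = 2 ^ α * Real.Gamma (α + 1 / 2) / (2 * Real.sqrt π) := by
    rw [hκdef, Real.mul_rpow (by norm_num) (Real.rpow_nonneg hB.le _),
      ← Real.rpow_mul hB.le, show 1 / α * α = 1 by field_simp, Real.rpow_one,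
      show (1:ℝ) / 2 + α = α + 1 / 2 by ring]
    ring
  set S₁ : Ω → ℝ := fun ω => ∑' i, ξ i ω * max 0 (X i ω) ^ 2 with hS₁def
  set S₂ : Ω → ℝ := fun ω => κ * ∑' i, ξ i ω with hS₂def
  have htermnn : ∀ i ω, 0 ≤ ξ i ω * max 0 (X i ω) ^ 2 := fun i ω =>
    mul_nonneg (hξpos i ω).le (by positivity)
  have hS₁nn : ∀ ω, 0 ≤ S₁ ω := fun ω => tsum_nonneg fun i => htermnn i ω
  have hS₂nn : ∀ ω, 0 ≤ S₂ ω := fun ω =>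
    mul_nonneg hκ.le (tsum_nonneg fun i => (hξpos i ω).le)
  have hS₁m : Measurable S₁ := by
    have heq : S₁ = fun ω => (∑' i, ENNReal.ofReal (ξ i ω * max 0 (X i ω) ^ 2)).toReal := by
      funext ω
      rw [ENNReal.tsum_toReal_eq (fun i => ENNReal.ofReal_ne_top)]
      simp_rw [ENNReal.toReal_ofReal (htermnn _ ω)]
      rfl
    rw [heq]
    apply Measurable.ennreal_toReal
    apply Measurable.ennreal_tsum
    intro i
    exact ((hξm i).mul ((measurable_const.max (hXm i)).pow_const 2)).ennreal_ofReal
  have hS₂m : Measurable S₂ := by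
    have heq : S₂ = fun ω => κ * (∑' i, ENNReal.ofReal (ξ i ω)).toReal := by
      funext ω
      rw [ENNReal.tsum_toReal_eq (fun i => ENNReal.ofReal_ne_top)]
      simp_rw [ENNReal.toReal_ofReal (hξpos _ ω).le]
      rfl
    rw [heq]
    exact (Measurable.ennreal_toReal (Measurable.ennreal_tsum
      fun i => (hξm i).ennreal_ofReal)).const_mul κ
  -- Laplace transforms agree
  have hLap : ∀ t : ℝ, 0 < t →
      ∫ ω, Real.exp (-(t * S₁ ω)) ∂P = ∫ ω, Real.exp (-(t * S₂ ω)) ∂P := by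
    intro t ht
    have hg₁ := hLaplace (fun z x => t * (max 0 z * max 0 x ^ 2))
      (by apply Measurable.const_mul; fun_prop)
      (fun z x => by positivity)
    have hg₂ := hLaplace (fun z x => t * κ * max 0 z)
      (by apply Measurable.const_mul (f := fun p : ℝ × ℝ => max 0 p.1); fun_prop)
      (fun z x => by positivity)
    -- identify the left-hand sides
    have hL₁ : ∀ ω, ∑' i, t * (max 0 (ξ i ω) * max 0 (X i ω) ^ 2) = t * S₁ ω := by
      intro ω
      rw [show ∑' i, t * (max 0 (ξ i ω) * max 0 (X i ω) ^ 2)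
          = ∑' i, t * (ξ i ω * max 0 (X i ω) ^ 2) from
        tsum_congr fun i => by rw [max_eq_right (hξpos i ω).le], tsum_mul_left]
    have hL₂ : ∀ ω, ∑' i, t * κ * max 0 (ξ i ω) = t * S₂ ω := by
      intro ω
      rw [show ∑' i, t * κ * max 0 (ξ i ω) = ∑' i, t * κ * ξ i ω from
        tsum_congr fun i => by rw [max_eq_right (hξpos i ω).le], tsum_mul_left,
        hS₂def, mul_assoc]
    simp_rw [hL₁] at hg₁
    simp_rw [hL₂] at hg₂
    rw [hg₁, hg₂]
    congr 1
    congr 1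
    -- now the equality of the two z-integrals
    set γ := gaussianReal 0 1 with hγ
    set ρ : ℝ → ℝ := fun z => α * c ^ α * z ^ (-α - 1) with hρ
    set G₁ : ℝ → ℝ := fun z => ∫ x, (1 - Real.exp (-(t * (max 0 z * max 0 x ^ 2)))) ∂γ
      with hG₁def
    set G₂ : ℝ → ℝ := fun z => ∫ x, (1 - Real.exp (-(t * κ * max 0 z))) ∂γ with hG₂def
    have hexp_mem : ∀ a : ℝ, 0 ≤ a → 0 ≤ 1 - Real.exp (-a) ∧ 1 - Real.exp (-a) ≤ 1 := by
      intro a ha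
      constructor
      · have := Real.exp_le_one_iff.mpr (neg_nonpos.mpr ha)
        linarith
      · linarith [Real.exp_pos (-a)]
    have hG₁nn : ∀ z, 0 ≤ G₁ z := by
      intro z
      apply integral_nonneg
      intro x
      exact (hexp_mem _ (by positivity)).1
    have hG₂nn : ∀ z, 0 ≤ G₂ z := by
      intro z
      apply integral_nonneg
      intro x
      exact (hexp_mem _ (by positivity)).1
    have hρnn : ∀ z : ℝ, 0 < z → 0 ≤ ρ z := by
      intro z hz
      rw [hρ]
      have h1 : (0:ℝ) ≤ c ^ α := Real.rpow_nonneg hc.le _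
      have h2 : (0:ℝ) ≤ z ^ (-α - 1) := Real.rpow_nonneg hz.le _
      positivity
    have hG₁sm : StronglyMeasurable G₁ := by
      apply MeasureTheory.StronglyMeasurable.integral_prod_right'
        (f := fun p : ℝ × ℝ => 1 - Real.exp (-(t * (max 0 p.1 * max 0 p.2 ^ 2))))
      apply Continuous.stronglyMeasurable
      fun_prop
    have hG₂sm : StronglyMeasurable G₂ := by
      apply MeasureTheory.StronglyMeasurable.integral_prod_right'
        (f := fun p : ℝ × ℝ => 1 - Real.exp (-(t * κ * max 0 p.1)))
      apply Continuous.stronglyMeasurable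
      fun_prop
    have hρm : Measurable ρ := by rw [hρ]; fun_prop
    -- convert both sides to lintegrals
    rw [integral_eq_lintegral_of_nonneg_ae ?nn1 ?sm1, integral_eq_lintegral_of_nonneg_ae ?nn2 ?sm2]
    case nn1 =>
      filter_upwards [ae_restrict_mem measurableSet_Ioi] with z hz
      exact mul_nonneg (hG₁nn z) (hρnn z hz)
    case sm1 => exact (hG₁sm.mul hρm.stronglyMeasurable).aestronglyMeasurable
    case nn2 =>
      filter_upwards [ae_restrict_mem measurableSet_Ioi] with z hz
      exact mul_nonneg (hG₂nn z) (hρnn z hz)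
    case sm2 => exact (hG₂sm.mul hρm.stronglyMeasurable).aestronglyMeasurable
    congr 1
    set K1 : ℝ≥0∞ := ∫⁻ z in Ioi (0:ℝ),
      ENNReal.ofReal (1 - Real.exp (-z)) * ENNReal.ofReal (α * c ^ α * z ^ (-α - 1)) with hK1
    -- the first lintegral
    have hIb : ∀ z : ℝ, 0 ≤ z →
        Integrable (fun x => 1 - Real.exp (-(t * (z * max 0 x ^ 2)))) γ := by
      intro z hz
      refine Integrable.mono' (integrable_const 1) ?_ (Filter.Eventually.of_forall fun x => ?_)
      · apply Continuous.aestronglyMeasurable; fun_prop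
      · have hm := hexp_mem (t * (z * max 0 x ^ 2)) (by positivity)
        rw [Real.norm_eq_abs, abs_of_nonneg hm.1]
        exact hm.2
    have step1 : ∫⁻ z in Ioi (0:ℝ), ENNReal.ofReal (G₁ z * ρ z)
        = ∫⁻ z in Ioi (0:ℝ), ∫⁻ x,
            ENNReal.ofReal (1 - Real.exp (-(t * (z * max 0 x ^ 2)))) *
              ENNReal.ofReal (ρ z) ∂γ := by
      apply setLIntegral_congr_fun measurableSet_Ioi
      intro z hz
      have hz0 : (0:ℝ) < z := hz
      have hGz : G₁ z = ∫ x, (1 - Real.exp (-(t * (z * max 0 x ^ 2)))) ∂γ := by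
        rw [hG₁def]
        simp only [max_eq_right hz0.le]
      beta_reduce
      rw [ENNReal.ofReal_mul (hG₁nn z), hGz,
        ofReal_integral_eq_lintegral_ofReal (hIb z hz0.le)
          (Filter.Eventually.of_forall fun x => (hexp_mem _ (by positivity)).1),
        lintegral_mul_const' _ _ ENNReal.ofReal_ne_top]
    have step2 : ∫⁻ z in Ioi (0:ℝ), ∫⁻ x,
          ENNReal.ofReal (1 - Real.exp (-(t * (z * max 0 x ^ 2)))) *
            ENNReal.ofReal (ρ z) ∂γ
        = ∫⁻ x, (∫⁻ z in Ioi (0:ℝ),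
            ENNReal.ofReal (1 - Real.exp (-(t * (z * max 0 x ^ 2)))) *
              ENNReal.ofReal (ρ z)) ∂γ := by
      refine lintegral_lintegral_swap (μ := volume.restrict (Ioi (0:ℝ))) (ν := γ)
        (f := fun z x => ENNReal.ofReal (1 - Real.exp (-(t * (z * max 0 x ^ 2)))) *
          ENNReal.ofReal (ρ z)) ?_
      apply Measurable.aemeasurable
      rw [hρ]
      fun_prop
    have hinner : ∀ x : ℝ, (∫⁻ z in Ioi (0:ℝ),
          ENNReal.ofReal (1 - Real.exp (-(t * (z * max 0 x ^ 2)))) *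
            ENNReal.ofReal (ρ z))
        = ENNReal.ofReal (t ^ α) * (ENNReal.ofReal (max 0 x ^ (2 * α)) * K1) := by
      intro x
      have harg : ∀ z : ℝ, t * (z * max 0 x ^ 2) = t * max 0 x ^ 2 * z := fun z => by ring
      simp_rw [harg, hρ]
      rw [stableK hα0 hα1 hc (lam := t * max 0 x ^ 2) (by positivity), ← hK1,
        Real.mul_rpow ht.le (by positivity),
        show (max 0 x ^ 2) ^ α = max 0 x ^ (2 * α) by
          rw [← Real.rpow_natCast (max 0 x) 2, ← Real.rpow_mul (le_max_left 0 x)]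
          norm_num,
        ENNReal.ofReal_mul (Real.rpow_nonneg ht.le _), mul_assoc]
    have hmommeas : Measurable fun x : ℝ => ENNReal.ofReal (max 0 x ^ (2 * α)) := by fun_prop
    have hL1 : ∫⁻ z in Ioi (0:ℝ), ENNReal.ofReal (G₁ z * ρ z)
        = ENNReal.ofReal (t ^ α) * (ENNReal.ofReal (κ ^ α) * K1) := by
      rw [step1, step2]
      calc ∫⁻ x, (∫⁻ z in Ioi (0:ℝ),
              ENNReal.ofReal (1 - Real.exp (-(t * (z * max 0 x ^ 2)))) *
                ENNReal.ofReal (ρ z)) ∂γ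
          = ∫⁻ x : ℝ, ENNReal.ofReal (t ^ α) *
              (ENNReal.ofReal (max 0 x ^ (2 * α)) * K1) ∂γ := lintegral_congr hinner
        _ = ENNReal.ofReal (t ^ α) *
              ∫⁻ x, ENNReal.ofReal (max 0 x ^ (2 * α)) * K1 ∂γ :=
            lintegral_const_mul' _ _ ENNReal.ofReal_ne_top
        _ = ENNReal.ofReal (t ^ α) *
              ((∫⁻ x, ENNReal.ofReal (max 0 x ^ (2 * α)) ∂γ) * K1) := by
            rw [lintegral_mul_const'' _ hmommeas.aemeasurable]
        _ = ENNReal.ofReal (t ^ α) * (ENNReal.ofReal (κ ^ α) * K1) := by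
            rw [hγ, gaussMoment hα0, hκα]
    -- the second lintegral
    have hG₂eq : ∀ z : ℝ, G₂ z = 1 - Real.exp (-(t * κ * max 0 z)) := by
      intro z
      rw [hG₂def]
      simp [integral_const]
    have hL2 : ∫⁻ z in Ioi (0:ℝ), ENNReal.ofReal (G₂ z * ρ z)
        = ENNReal.ofReal (t ^ α) * (ENNReal.ofReal (κ ^ α) * K1) := by
      have hcongr : ∫⁻ z in Ioi (0:ℝ), ENNReal.ofReal (G₂ z * ρ z)
          = ∫⁻ z in Ioi (0:ℝ), ENNReal.ofReal (1 - Real.exp (-(t * κ * z))) *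
              ENNReal.ofReal (α * c ^ α * z ^ (-α - 1)) := by
        apply setLIntegral_congr_fun measurableSet_Ioi
        intro z hz
        have hz0 : (0:ℝ) < z := hz
        beta_reduce
        rw [hG₂eq z, max_eq_right hz0.le, ENNReal.ofReal_mul
          (hexp_mem _ (by positivity)).1, hρ]
      rw [hcongr, stableK hα0 hα1 hc (lam := t * κ) (by positivity), ← hK1,
        Real.mul_rpow ht.le hκ.le, ENNReal.ofReal_mul (Real.rpow_nonneg ht.le _), mul_assoc]
    rw [hL1, hL2]
  -- moments of exp(-S) agree
  set Y₁ : Ω → ℝ := fun ω => Real.exp (-(S₁ ω)) with hY₁def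
  set Y₂ : Ω → ℝ := fun ω => Real.exp (-(S₂ ω)) with hY₂def
  have hY₁m : Measurable Y₁ := (Real.measurable_exp.comp hS₁m.neg)
  have hY₂m : Measurable Y₂ := (Real.measurable_exp.comp hS₂m.neg)
  have hYmem : ∀ (S : Ω → ℝ), (∀ ω, 0 ≤ S ω) →
      ∀ ω, Real.exp (-(S ω)) ∈ Set.Icc (0:ℝ) 1 := by
    intro S hS ω
    exact ⟨(Real.exp_pos _).le, Real.exp_le_one_iff.mpr (by linarith [hS ω])⟩
  have hmom : ∀ n : ℕ, ∫ ω, (Y₁ ω) ^ n ∂P = ∫ ω, (Y₂ ω) ^ n ∂P := by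
    intro n
    rcases Nat.eq_zero_or_pos n with h0 | hn
    · simp [h0]
    · have ht : (0:ℝ) < n := by exact_mod_cast hn
      have h1 : ∀ (S : Ω → ℝ) ω, Real.exp (-(S ω)) ^ n = Real.exp (-((n:ℝ) * S ω)) := by
        intro S ω
        rw [← Real.exp_nat_mul]
        congr 1
        ring
      simp_rw [hY₁def, hY₂def, h1]
      exact hLap n ht
  -- pushforward measures agree
  have hmap : P.map Y₁ = P.map Y₂ := by
    have i₁ : IsProbabilityMeasure (P.map Y₁) := Measure.isProbabilityMeasure_map hY₁m.aemeasurable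
    have i₂ : IsProbabilityMeasure (P.map Y₂) := Measure.isProbabilityMeasure_map hY₂m.aemeasurable
    apply moment_ext
    · rw [Measure.map_apply hY₁m measurableSet_Icc.compl]
      have : Y₁ ⁻¹' (Set.Icc (0:ℝ) 1)ᶜ = ∅ := by
        apply Set.eq_empty_iff_forall_notMem.mpr
        intro ω hω
        exact hω (hYmem S₁ hS₁nn ω)
      rw [this, measure_empty]
    · rw [Measure.map_apply hY₂m measurableSet_Icc.compl]
      have : Y₂ ⁻¹' (Set.Icc (0:ℝ) 1)ᶜ = ∅ := by
        apply Set.eq_empty_iff_forall_notMem.mpr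
        intro ω hω
        exact hω (hYmem S₂ hS₂nn ω)
      rw [this, measure_empty]
    · intro n
      rw [integral_map hY₁m.aemeasurable ((measurable_id.pow_const n).aestronglyMeasurable (f := fun x : ℝ => x ^ n)),
        integral_map hY₂m.aemeasurable ((measurable_id.pow_const n).aestronglyMeasurable (f := fun x : ℝ => x ^ n))]
      exact hmom n
  -- conclude
  have hYid : IdentDistrib Y₁ Y₂ P P := ⟨hY₁m.aemeasurable, hY₂m.aemeasurable, hmap⟩
  have hcomp := hYid.comp (u := fun y : ℝ => -Real.log y) Real.measurable_log.neg
  have he₁ : (fun y : ℝ => -Real.log y) ∘ Y₁ = S₁ := by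
    funext ω; simp [hY₁def, Real.log_exp]
  have he₂ : (fun y : ℝ => -Real.log y) ∘ Y₂ = S₂ := by
    funext ω; simp [hY₂def, Real.log_exp]
  rw [he₁, he₂] at hcomp
  exact hcomp
end
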